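/- arXiv:2206.02137 — 7 statements merged into one kernel-verified Lean document; each statement's English description precedes it below -/
import Mathlib

section
/- Let a, b > 0 and let g be the inverse Gaussian density g(t) = sqrt(a/(2π t³)) · exp(−a(t−b)²/(2b²t)) for t > 0. Then for every real λ with λ ≥ −a/(2b²), the Laplace transform of g satisfies ∫₀^∞ e^{−λt} g(t) dt = exp( (a/b) · (1 − sqrt(1 + 2b²λ/a)) ). -/
open MeasureTheory Real Set

set_option maxHeartbeats 2000000 in
/-- Key integral: `∫ x in (0,∞), exp (-(A x² + B/x²)) = √π/(2√A) · exp (-2√(AB))`. -/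
lemma ig_key_integral (A B : ℝ) (hA : 0 < A) (hB : 0 ≤ B) :
    ∫ x in Ioi (0:ℝ), Real.exp (-(A*x^2 + B/x^2))
      = Real.sqrt π / (2 * Real.sqrt A) * Real.exp (-2 * Real.sqrt (A*B)) := by
  rcases hB.lt_or_eq with hB0 | hB0
  swap
  · rw [← hB0]
    simp only [zero_div, add_zero, mul_zero, Real.sqrt_zero, Real.exp_zero, mul_one]
    simp only [← neg_mul]
    rw [integral_gaussian_Ioi A, Real.sqrt_div pi_nonneg A]
    ring
  have hB : 0 < B := hB0
  set sA := Real.sqrt A with hsA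
  set sB := Real.sqrt B with hsB
  have hsA0 : 0 < sA := Real.sqrt_pos.mpr hA
  have hsB0 : 0 < sB := Real.sqrt_pos.mpr hB
  have hsA2 : sA^2 = A := Real.sq_sqrt hA.le
  have hsB2 : sB^2 = B := Real.sq_sqrt hB.le
  set f : ℝ → ℝ := fun x => sA*x - sB/x with hf
  have hderiv : ∀ x ∈ Ioi (0:ℝ), HasDerivWithinAt f (sA + sB/x^2) (Ioi 0) x := by
    intro x hx
    have hx0 : x ≠ 0 := ne_of_gt hx
    have h1 : HasDerivAt f (sA * 1 - sB * (-(x^2)⁻¹)) x := by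
      have := ((hasDerivAt_id x).const_mul sA).sub ((hasDerivAt_inv hx0).const_mul sB)
      exact this.congr_of_eventuallyEq (Filter.Eventually.of_forall fun y => by simp [f, div_eq_mul_inv])
    have h2 : sA * 1 - sB * (-(x^2)⁻¹) = sA + sB/x^2 := by field_simp; ring
    exact (h2 ▸ h1).hasDerivWithinAt
  have hmono : StrictMonoOn f (Ioi 0) := by
    apply strictMonoOn_of_deriv_pos (convex_Ioi 0)
    · apply ContinuousOn.sub
      · exact (continuous_const.mul continuous_id).continuousOn
      · exact continuousOn_const.div continuousOn_id (fun x hx => ne_of_gt hx)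
    · intro x hx
      rw [interior_Ioi] at hx
      have := ((hderiv x hx).hasDerivAt (Ioi_mem_nhds hx)).deriv
      rw [this]
      positivity
  have hinj : InjOn f (Ioi 0) := hmono.injOn
  have himg : f '' Ioi 0 = univ := by
    apply eq_univ_of_forall
    intro y
    set s := Real.sqrt (y^2 + 4*sA*sB) with hs
    have hs2 : s^2 = y^2 + 4*sA*sB := Real.sq_sqrt (by positivity)
    have hs0 : 0 ≤ s := Real.sqrt_nonneg _
    have hxpos : 0 < (y + s)/(2*sA) := by
      have : -y < s := by nlinarith [mul_pos hsA0 hsB0]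
      have : 0 < y + s := by linarith
      positivity
    refine ⟨(y + s)/(2*sA), hxpos, ?_⟩
    have hxne : (y + s)/(2*sA) ≠ 0 := ne_of_gt hxpos
    show sA * ((y + s)/(2*sA)) - sB / ((y + s)/(2*sA)) = y
    have hys : (0:ℝ) < y + s := by nlinarith [mul_pos hsA0 hsB0]
    field_simp
    nlinarith [hs2]
  set E : ℝ → ℝ := fun x => Real.exp (-(A*x^2 + B/x^2)) with hE
  -- integrability of E on Ioi 0
  have hEint : IntegrableOn E (Ioi 0) := by
    apply Integrable.mono' ((integrable_exp_neg_mul_sq hA).restrict (s := Ioi 0))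
    · exact ((by measurability : Measurable E).aestronglyMeasurable)
    · filter_upwards [ae_restrict_mem measurableSet_Ioi] with x hx
      rw [Real.norm_eq_abs, abs_of_pos (Real.exp_pos _)]
      apply Real.exp_le_exp.mpr
      have : 0 ≤ B/x^2 := by positivity
      nlinarith
  -- second substitution f2 x = c/x
  set c := sB/sA with hc
  have hc0 : 0 < c := div_pos hsB0 hsA0
  have hc2 : c^2 = B/A := by rw [hc, div_pow, hsA2, hsB2]
  set f2 : ℝ → ℝ := fun x => c/x with hf2
  have hderiv2 : ∀ x ∈ Ioi (0:ℝ), HasDerivWithinAt f2 (-(c/x^2)) (Ioi 0) x := by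
    intro x hx
    have hx0 : x ≠ 0 := ne_of_gt hx
    have h1 : HasDerivAt f2 (c * (-(x^2)⁻¹)) x := by
      simpa [f2, div_eq_mul_inv] using (hasDerivAt_inv hx0).const_mul c
    have h2 : c * (-(x^2)⁻¹) = -(c/x^2) := by field_simp
    exact (h2 ▸ h1).hasDerivWithinAt
  have hinj2 : InjOn f2 (Ioi 0) := by
    intro x hx y hy h
    have h' : c/x = c/y := h
    rw [div_eq_div_iff (ne_of_gt hx) (ne_of_gt hy)] at h'
    exact (mul_left_cancel₀ (ne_of_gt hc0) h').symm
  have himg2 : f2 '' Ioi 0 = Ioi 0 := by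
    ext y
    simp only [mem_image, mem_Ioi]
    constructor
    · rintro ⟨x, hx, rfl⟩; positivity
    · intro hy; exact ⟨c/y, by positivity, by show c/(c/y) = y; field_simp⟩
  have hEf2 : ∀ x ∈ Ioi (0:ℝ), E (f2 x) = E x := by
    intro x hx
    have hx0 : x ≠ 0 := ne_of_gt hx
    have hA0 : A ≠ 0 := ne_of_gt hA
    show Real.exp (-(A*(c/x)^2 + B/(c/x)^2)) = Real.exp (-(A*x^2 + B/x^2))
    congr 1
    rw [div_pow, hc2]
    field_simp
    ring
  -- K = ∫ (c/x^2) E x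
  have hsub2 : ∫ x in Ioi (0:ℝ), E x = ∫ x in Ioi (0:ℝ), (c/x^2) * E x := by
    conv_lhs => rw [← himg2]
    rw [integral_image_eq_integral_abs_deriv_smul measurableSet_Ioi hderiv2 hinj2]
    apply setIntegral_congr_fun measurableSet_Ioi
    intro x hx
    have hx0 : (0:ℝ) < c/x^2 := by exact div_pos hc0 (pow_pos hx 2)
    show |(-(c/x^2))| • E (f2 x) = c/x^2 * E x
    rw [abs_neg, abs_of_pos hx0, hEf2 x hx, smul_eq_mul]
  -- integrability of (c/x^2) * E
  have hint2 : IntegrableOn (fun x => (c/x^2) * E x) (Ioi 0) := by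
    have h0 : IntegrableOn E (f2 '' Ioi 0) := by rw [himg2]; exact hEint
    have := (integrableOn_image_iff_integrableOn_abs_deriv_smul measurableSet_Ioi hderiv2 hinj2 E).mp h0
    apply this.congr_fun _ measurableSet_Ioi
    intro x hx
    have hx0 : (0:ℝ) < c/x^2 := div_pos hc0 (pow_pos hx 2)
    show |(-(c/x^2))| • E (f2 x) = c/x^2 * E x
    rw [abs_neg, abs_of_pos hx0, hEf2 x hx, smul_eq_mul]
  -- first substitution: Gaussian
  have hgauss : (∫ x in (univ : Set ℝ), Real.exp (-x^2)) = Real.sqrt π := by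
    rw [Measure.restrict_univ]
    simpa using integral_gaussian 1
  have hmain : Real.sqrt π = ∫ x in Ioi (0:ℝ), ((sA + sB/x^2) * Real.exp (2*sA*sB)) * E x := by
    rw [← hgauss, ← himg,
      integral_image_eq_integral_abs_deriv_smul measurableSet_Ioi hderiv hinj]
    apply setIntegral_congr_fun measurableSet_Ioi
    intro x hx
    have hx0 : x ≠ 0 := ne_of_gt hx
    show |sA + sB/x^2| • Real.exp (-(f x)^2) = ((sA + sB/x^2) * Real.exp (2*sA*sB)) * E x
    rw [abs_of_pos (by positivity : (0:ℝ) < sA + sB/x^2)]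
    simp only [smul_eq_mul, hE]
    rw [mul_assoc, ← Real.exp_add]
    congr 1
    have : (f x)^2 = A*x^2 + B/x^2 - 2*sA*sB := by
      simp only [f]
      field_simp
      linear_combination x^2*x^2*hsA2 + hsB2
    rw [this]
    ring
  -- split
  have hsplit : Real.sqrt π = Real.exp (2*sA*sB) * (sA * (∫ x in Ioi (0:ℝ), E x) + sA * (∫ x in Ioi (0:ℝ), E x)) := by
    rw [hmain]
    have h1 : ∀ x ∈ Ioi (0:ℝ), ((sA + sB/x^2) * Real.exp (2*sA*sB)) * E x
        = Real.exp (2*sA*sB) * (sA * E x) + Real.exp (2*sA*sB) * ((c/x^2) * E x) * sA := by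
      intro x hx
      have hx0 : x ≠ 0 := ne_of_gt hx
      have : sB = c * sA := by rw [hc]; field_simp
      rw [this]; ring
    rw [setIntegral_congr_fun measurableSet_Ioi h1,
      integral_add ((hEint.const_mul sA).const_mul _) (((hint2.const_mul _).mul_const sA))]
    simp only [integral_const_mul, integral_mul_const]
    rw [← hsub2]
    ring
  have hKval : (∫ x in Ioi (0:ℝ), E x) = Real.sqrt π / (2*sA) * Real.exp (-(2*sA*sB)) := by
    have hexp : Real.exp (2*sA*sB) ≠ 0 := Real.exp_ne_zero _
    rw [Real.exp_neg]
    field_simp at hsplit ⊢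
    linarith [hsplit]
  rw [show Real.sqrt (A*B) = sA * sB from Real.sqrt_mul hA.le B]
  rw [hKval]
  ring_nf

/-- The inverse Gaussian density `IG(a,b)`: the first-passage-time density of a
geometric Brownian motion through a constant boundary. -/
noncomputable def ig (a b t : ℝ) : ℝ :=
  Real.sqrt (a / (2 * Real.pi * t ^ 3)) * Real.exp (-(a * (t - b) ^ 2) / (2 * b ^ 2 * t))

set_option maxHeartbeats 2000000 in
theorem laplace_transform_ig (a b : ℝ) (ha : 0 < a) (hb : 0 < b) (l : ℝ)
    (hl : -a / (2 * b ^ 2) ≤ l) :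
    (∫ t in Set.Ioi (0 : ℝ), Real.exp (-l * t) * ig a b t) =
      Real.exp (a / b * (1 - Real.sqrt (1 + 2 * b ^ 2 * l / a))) := by
  have hb2 : (0:ℝ) < b^2 := by positivity
  set p := l + a/(2*b^2) with hp
  have hp0 : 0 ≤ p := by
    rw [hp]
    rw [neg_div] at hl
    linarith
  set q := a/2 with hq
  have hq0 : 0 < q := by rw [hq]; linarith
  set f3 : ℝ → ℝ := fun x => (x^2)⁻¹ with hf3
  have hderiv3 : ∀ x ∈ Ioi (0:ℝ), HasDerivWithinAt f3 (-(2/x^3)) (Ioi 0) x := by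
    intro x hx
    have hx0 : x ≠ 0 := ne_of_gt hx
    have h1 : HasDerivAt f3 (-((2:ℕ) * x^(2-1)) / (x^2)^2) x :=
      (hasDerivAt_pow 2 x).inv (pow_ne_zero 2 hx0)
    have h2 : -((2:ℕ) * x^(2-1)) / (x^2)^2 = -(2/x^3) := by
      push_cast
      field_simp
    exact (h2 ▸ h1).hasDerivWithinAt
  have hinj3 : InjOn f3 (Ioi 0) := by
    intro x hx y hy h
    have h2 : x^2 = y^2 := inv_injective h
    have h3 : (x - y) * (x + y) = 0 := by linear_combination h2
    rcases mul_eq_zero.mp h3 with h4 | h4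
    · linarith
    · have : (0:ℝ) < x + y := add_pos hx hy
      linarith
  have himg3 : f3 '' Ioi 0 = Ioi 0 := by
    ext y
    simp only [mem_image, mem_Ioi]
    constructor
    · rintro ⟨x, hx, rfl⟩
      exact inv_pos.mpr (pow_pos (mem_Ioi.mp hx) 2)
    · intro hy
      refine ⟨(Real.sqrt y)⁻¹, by simp [Real.sqrt_pos.mpr hy], ?_⟩
      show (((Real.sqrt y)⁻¹)^2)⁻¹ = y
      rw [inv_pow, inv_inv, Real.sq_sqrt hy.le]
  have hkey := ig_key_integral q p hq0 hp0
  have hC : (0:ℝ) < Real.sqrt (a/(2*π)) := Real.sqrt_pos.mpr (div_pos ha (mul_pos two_pos pi_pos))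
  calc (∫ t in Ioi (0:ℝ), Real.exp (-l * t) * ig a b t)
      = ∫ x in Ioi (0:ℝ), (2 * Real.sqrt (a/(2*π)) * Real.exp (a/b))
          * Real.exp (-(q*x^2 + p/x^2)) := by
        conv_lhs => rw [← himg3,
          integral_image_eq_integral_abs_deriv_smul measurableSet_Ioi hderiv3 hinj3]
        apply setIntegral_congr_fun measurableSet_Ioi
        intro x hx
        have hxp : (0:ℝ) < x := mem_Ioi.mp hx
        have hx0 : x ≠ 0 := ne_of_gt hxp
        have hx3 : (0:ℝ) < 2/x^3 := by positivity
        show |(-(2/x^3))| • (Real.exp (-l * f3 x) * ig a b (f3 x))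
            = (2 * Real.sqrt (a/(2*π)) * Real.exp (a/b)) * Real.exp (-(q*x^2 + p/x^2))
        rw [abs_neg, abs_of_pos hx3, smul_eq_mul]
        have hfx : f3 x = (x^2)⁻¹ := rfl
        rw [hfx]
        unfold ig
        have hsq : Real.sqrt (a / (2 * π * ((x^2)⁻¹) ^ 3)) = x^3 * Real.sqrt (a/(2*π)) := by
          have h1 : a / (2 * π * ((x^2)⁻¹) ^ 3) = (x^3)^2 * (a/(2*π)) := by
            field_simp
          rw [h1, Real.sqrt_mul (sq_nonneg _), Real.sqrt_sq (by positivity : (0:ℝ) ≤ x^3)]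
        rw [hsq]
        rw [show Real.exp (-l * (x^2)⁻¹) * (x^3 * Real.sqrt (a/(2*π)) *
              Real.exp (-(a * ((x^2)⁻¹ - b) ^ 2) / (2 * b ^ 2 * (x^2)⁻¹)))
            = (x^3 * Real.sqrt (a/(2*π))) * (Real.exp (-l * (x^2)⁻¹) *
              Real.exp (-(a * ((x^2)⁻¹ - b) ^ 2) / (2 * b ^ 2 * (x^2)⁻¹))) from by ring]
        rw [← Real.exp_add]
        rw [show (2 * Real.sqrt (a/(2*π)) * Real.exp (a/b)) * Real.exp (-(q*x^2 + p/x^2))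
            = (2 * Real.sqrt (a/(2*π))) * (Real.exp (a/b) * Real.exp (-(q*x^2 + p/x^2))) from by ring]
        rw [← Real.exp_add]
        have hexparg : -l * (x^2)⁻¹ + -(a * ((x^2)⁻¹ - b) ^ 2) / (2 * b ^ 2 * (x^2)⁻¹)
            = a/b + -(q*x^2 + p/x^2) := by
          rw [hq, hp]
          field_simp
          ring
        rw [hexparg]
        field_simp
    _ = (2 * Real.sqrt (a/(2*π)) * Real.exp (a/b)) *
          (Real.sqrt π / (2 * Real.sqrt q) * Real.exp (-2 * Real.sqrt (q*p))) := by
        rw [integral_const_mul, hkey]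
    _ = Real.exp (a / b * (1 - Real.sqrt (1 + 2 * b ^ 2 * l / a))) := by
        have hq' : (0:ℝ) < Real.sqrt q := Real.sqrt_pos.mpr hq0
        have hpi : (0:ℝ) < Real.sqrt π := Real.sqrt_pos.mpr pi_pos
        have hcoef : 2 * Real.sqrt (a/(2*π)) * (Real.sqrt π / (2 * Real.sqrt q)) = 1 := by
          have h1 : a/(2*π) = q/π := by rw [hq]; field_simp
          rw [h1, Real.sqrt_div hq0.le π]
          field_simp
        have hexp2 : a / b * (1 - Real.sqrt (1 + 2 * b ^ 2 * l / a))
            = a/b + -2 * Real.sqrt (q*p) := by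
          have hab : (0:ℝ) ≤ a/b := by positivity
          have h2 : a/b * Real.sqrt (1 + 2 * b ^ 2 * l / a)
              = Real.sqrt ((a/b)^2 * (1 + 2 * b ^ 2 * l / a)) := by
            rw [Real.sqrt_mul (sq_nonneg _), Real.sqrt_sq hab]
          have h3 : (2:ℝ) * Real.sqrt (q*p) = Real.sqrt (4 * (q*p)) := by
            rw [show (4:ℝ) = 2^2 by norm_num, Real.sqrt_mul (sq_nonneg 2),
              Real.sqrt_sq (by norm_num : (0:ℝ) ≤ 2)]
          have h4 : (a/b)^2 * (1 + 2 * b ^ 2 * l / a) = 4 * (q*p) := by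
            rw [hq, hp]
            field_simp
            ring
          rw [mul_sub, mul_one, h2, h4, ← h3]
          ring
        rw [hexp2, Real.exp_add]
        rw [show 2 * Real.sqrt (a/(2*π)) * Real.exp (a/b) *
              (Real.sqrt π / (2 * Real.sqrt q) * Real.exp (-2 * Real.sqrt (q*p)))
            = (2 * Real.sqrt (a/(2*π)) * (Real.sqrt π / (2 * Real.sqrt q))) *
              (Real.exp (a/b) * Real.exp (-2 * Real.sqrt (q*p))) from by ring]
        rw [hcoef, one_mul]
end

section
/- Let a, b > 0 and let g be the inverse Gaussian density IG(a,b), with moments m_n = ∫₀^∞ tⁿ g(t) dt. Then m_0 = 1, m_1 = b, and for every integer n ≥ 1 the recursion m_{n+1} = ((2n−1) b² / a) · m_n + b² · m_{n−1} holds. -/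
open MeasureTheory Real

/-- The `n`-th moment of the inverse Gaussian density `IG(a,b)`. -/
noncomputable def igMoment (a b : ℝ) (n : ℕ) : ℝ :=
  ∫ t in Set.Ioi (0 : ℝ), t ^ n * ig a b t


section IGaux
open Set Filter Topology

noncomputable def igE (a b t : ℝ) : ℝ := -(a * (t - b) ^ 2) / (2 * b ^ 2 * t)
noncomputable def igF (a b s t : ℝ) : ℝ := t ^ s * Real.exp (igE a b t)
noncomputable def igJ (a b s : ℝ) : ℝ := ∫ t in Set.Ioi (0:ℝ), igF a b s t

lemma igE_eq (a b t : ℝ) (hb : 0 < b) (ht : 0 < t) :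
    igE a b t = a / b - a / (2 * b ^ 2) * t - a / 2 / t := by
  unfold igE; field_simp; ring

lemma igE_zero (a b : ℝ) : igE a b 0 = 0 := by simp [igE]

lemma igF_nonneg (a b s t : ℝ) (ht : 0 ≤ t) : 0 ≤ igF a b s t :=
  mul_nonneg (Real.rpow_nonneg ht s) (Real.exp_pos _).le

lemma pow_div_fact_le_exp {x : ℝ} (hx : 0 ≤ x) (k : ℕ) : x ^ k / k.factorial ≤ exp x :=
  calc x ^ k / k.factorial ≤ ∑ i ∈ Finset.range (k+1), x ^ i / i.factorial :=
        Finset.single_le_sum (f := fun i => x ^ i / (i.factorial:ℝ))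
          (fun i _ => by positivity) (Finset.self_mem_range_succ k)
    _ ≤ exp x := Real.sum_le_exp_of_nonneg hx _

lemma igF_cont (a b s : ℝ) (hb : 0 < b) : ContinuousOn (igF a b s) (Ioi 0) := by
  apply ContinuousOn.mul
  · exact fun t ht => (Real.continuousAt_rpow_const t s (Or.inl (ne_of_gt ht))).continuousWithinAt
  · apply Real.continuous_exp.comp_continuousOn
    apply ContinuousOn.div (by fun_prop) (by fun_prop)
    intro t ht
    have h1 : (0:ℝ) < t := ht
    positivity

lemma igF_integrable (a b : ℝ) (ha : 0 < a) (hb : 0 < b) (s : ℝ) :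
    IntegrableOn (igF a b s) (Ioi 0) := by
  obtain ⟨k, hk⟩ : ∃ k : ℕ, -1 < s + k := ⟨⌈-s⌉₊ + 1, by
    have := Nat.le_ceil (-s); push_cast; linarith⟩
  set p : ℝ := a / (2 * b ^ 2) with hp
  have hp0 : 0 < p := by positivity
  set q : ℝ := a / 2 with hq
  have hq0 : 0 < q := by positivity
  set M : ℝ := exp (a / b) * (k.factorial / q ^ k) with hM
  have hM0 : 0 < M := by positivity
  have hbound : IntegrableOn (fun t : ℝ => M * (t ^ (s + k) * exp (-p * t))) (Ioi 0) := by
    apply Integrable.const_mul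
    have := integrableOn_rpow_mul_exp_neg_mul_rpow (p := 1) (s := s + k) (b := p) hk one_pos hp0
    refine this.congr_fun (fun t ht => ?_) measurableSet_Ioi
    simp only [Real.rpow_one]
  refine hbound.mono' ?_ ?_
  · exact (igF_cont a b s hb).aestronglyMeasurable measurableSet_Ioi
  · filter_upwards [ae_restrict_mem measurableSet_Ioi] with t ht
    have ht0 : (0:ℝ) < t := ht
    rw [Real.norm_of_nonneg (igF_nonneg a b s t ht0.le)]
    have hE : igE a b t = a / b + (-p * t) + (- (q / t)) := by
      rw [igE_eq a b t hb ht0]; ring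
    have hexp : exp (-(q / t)) ≤ k.factorial * (t / q) ^ k := by
      rw [Real.exp_neg]
      rw [inv_le_comm₀ (Real.exp_pos _) (by positivity)]
      calc ((k.factorial : ℝ) * (t / q) ^ k)⁻¹ = (q / t) ^ k / k.factorial := by
            rw [mul_inv, ← inv_pow, inv_div, mul_comm]; ring
      _ ≤ exp (q / t) := pow_div_fact_le_exp (by positivity) k
    calc igF a b s t = t ^ s * (exp (a/b) * exp (-p * t) * exp (-(q/t))) := by
          rw [igF, hE, Real.exp_add, Real.exp_add]
      _ ≤ t ^ s * (exp (a/b) * exp (-p * t) * (k.factorial * (t/q)^k)) := by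
          apply mul_le_mul_of_nonneg_left _ (Real.rpow_nonneg ht0.le s)
          exact mul_le_mul_of_nonneg_left hexp (by positivity)
      _ = M * (t ^ (s + k) * exp (-p * t)) := by
          rw [Real.rpow_add ht0, Real.rpow_natCast, hM, div_pow]
          field_simp

lemma igF_tendsto_atTop (a b : ℝ) (ha : 0 < a) (hb : 0 < b) (s : ℝ) :
    Tendsto (igF a b s) atTop (𝓝 0) := by
  have hp0 : 0 < a / (2 * b ^ 2) := by positivity
  have h1 : Tendsto (fun t : ℝ => exp (a/b) * (t ^ s * exp (-(a/(2*b^2)) * t)) *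
      exp (-(a/2 * t⁻¹))) atTop (𝓝 (exp (a/b) * 0 * exp (-(a/2 * 0)))) := by
    refine (Filter.Tendsto.const_mul _
      (tendsto_rpow_mul_exp_neg_mul_atTop_nhds_zero s _ hp0)).mul ?_
    exact (Real.continuous_exp.tendsto _).comp
      ((tendsto_inv_atTop_zero.const_mul (a/2)).neg)
  simp only [mul_zero, zero_mul, neg_zero] at h1
  refine h1.congr' ?_
  filter_upwards [eventually_gt_atTop (0:ℝ)] with t ht
  rw [igF, igE_eq a b t hb ht,
    show a/b - a/(2*b^2)*t - a/2/t = (a/b) + (-(a/(2*b^2))*t) + (-(a/2 * t⁻¹)) by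
      field_simp; ring,
    Real.exp_add, Real.exp_add]
  ring

lemma igF_tendsto_zero (a b : ℝ) (ha : 0 < a) (hb : 0 < b) (s : ℝ) :
    Tendsto (igF a b s) (𝓝[>] (0:ℝ)) (𝓝 0) := by
  have hq0 : 0 < a / 2 := by positivity
  have h2 : Tendsto (fun t : ℝ => (exp (a/b) * exp (-(a/(2*b^2)) * t)) *
      ((t⁻¹) ^ (-s) * exp (-(a/2) * t⁻¹))) (𝓝[>] (0:ℝ))
      (𝓝 ((exp (a/b) * exp (-(a/(2*b^2)) * 0)) * 0)) := by
    refine Filter.Tendsto.mul ?_ ?_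
    · apply Filter.Tendsto.mono_left _ nhdsWithin_le_nhds
      exact (Filter.Tendsto.const_mul _ ((Real.continuous_exp.tendsto _).comp
        ((continuous_const.mul continuous_id).tendsto 0)))
    · exact (tendsto_rpow_mul_exp_neg_mul_atTop_nhds_zero (-s) _ hq0).comp
        tendsto_inv_nhdsGT_zero
  simp only [mul_zero] at h2
  refine h2.congr' ?_
  filter_upwards [self_mem_nhdsWithin] with t (ht : (0:ℝ) < t)
  rw [Real.inv_rpow ht.le, Real.rpow_neg ht.le, inv_inv]
  rw [igF, igE_eq a b t hb ht,
    show a/b - a/(2*b^2)*t - a/2/t = (a/b) + (-(a/(2*b^2))*t) + (-(a/2)*t⁻¹) by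
      field_simp; ring,
    Real.exp_add, Real.exp_add]
  ring

lemma igF_hasDerivAt (a b : ℝ) (ha : 0 < a) (hb : 0 < b) (s : ℝ) {t : ℝ} (ht : 0 < t) :
    HasDerivAt (igF a b s)
      (s * igF a b (s-1) t - a/(2*b^2) * igF a b s t + a/2 * igF a b (s-2) t) t := by
  have hden : (2*b^2*t) ≠ 0 := by positivity
  have hnum : HasDerivAt (fun t : ℝ => -(a*(t-b)^2)) (-(a*(2*(t-b)))) t := by
    have h := (((hasDerivAt_id t).sub_const b).pow 2).const_mul a
    simpa using h.fun_neg
  have hd : HasDerivAt (fun t : ℝ => 2*b^2*t) (2*b^2) t := by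
    simpa using (hasDerivAt_id t).const_mul (2*b^2)
  have hE : HasDerivAt (igE a b)
      ((-(a*(2*(t-b))) * (2*b^2*t) - (-(a*(t-b)^2)) * (2*b^2)) / (2*b^2*t)^2) t := by
    exact hnum.div hd hden
  have h1 : HasDerivAt (fun t : ℝ => t ^ s) (s * t ^ (s-1)) t :=
    Real.hasDerivAt_rpow_const (Or.inl ht.ne')
  have h2 := h1.mul hE.exp
  refine h2.congr_deriv ?_
  simp only [igF]
  rw [Real.rpow_sub ht, Real.rpow_sub ht, Real.rpow_one]
  rw [show (2:ℝ) = ((2:ℕ):ℝ) by norm_num, Real.rpow_natCast]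
  field_simp [Real.exp_ne_zero]
  ring

lemma igF_zero_val (a b s : ℝ) (hs : s ≠ 0) : igF a b s 0 = 0 := by
  rw [igF, Real.zero_rpow hs, zero_mul]

lemma igJ_relation (a b : ℝ) (ha : 0 < a) (hb : 0 < b) (s : ℝ) (hs : s ≠ 0) :
    s * igJ a b (s-1) - a/(2*b^2) * igJ a b s + a/2 * igJ a b (s-2) = 0 := by
  have i1 := igF_integrable a b ha hb (s-1)
  have i2 := igF_integrable a b ha hb s
  have i3 := igF_integrable a b ha hb (s-2)
  have hcont : ContinuousWithinAt (igF a b s) (Ici 0) 0 := by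
    rw [← continuousWithinAt_Ioi_iff_Ici]
    unfold ContinuousWithinAt
    rw [igF_zero_val a b s hs]
    exact igF_tendsto_zero a b ha hb s
  have hint : IntegrableOn (fun t => s * igF a b (s-1) t - a/(2*b^2) * igF a b s t
      + a/2 * igF a b (s-2) t) (Ioi 0) :=
    ((i1.const_mul s).sub (i2.const_mul (a/(2*b^2)))).add (i3.const_mul (a/2))
  have key := integral_Ioi_of_hasDerivAt_of_tendsto hcont
    (fun x hx => igF_hasDerivAt a b ha hb s (mem_Ioi.mp hx)) hint
    (igF_tendsto_atTop a b ha hb s)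
  rw [igF_zero_val a b s hs, zero_sub, neg_zero] at key
  have hsub : Integrable (fun x => s * igF a b (s-1) x - a/(2*b^2) * igF a b s x)
      (volume.restrict (Ioi 0)) := (i1.const_mul s).sub (i2.const_mul (a/(2*b^2)))
  have h3 : Integrable (fun x => a/2 * igF a b (s-2) x) (volume.restrict (Ioi 0)) :=
    i3.const_mul (a/2)
  rw [igJ, igJ, igJ, ← integral_const_mul, ← integral_const_mul, ← integral_const_mul,
    ← integral_sub (i1.const_mul s) (i2.const_mul (a/(2*b^2))),
    ← integral_add hsub h3]
  exact key

lemma igJ_half (a b : ℝ) (ha : 0 < a) (hb : 0 < b) :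
    igJ a b (-(1:ℝ)/2) = b * igJ a b (-(3:ℝ)/2) := by
  have himg : (fun t : ℝ => b^2/t) '' Ioi 0 = Ioi 0 := by
    ext x
    simp only [mem_image, mem_Ioi]
    constructor
    · rintro ⟨t, ht, rfl⟩; positivity
    · intro hx; exact ⟨b^2/x, by positivity, by field_simp⟩
  have hderiv : ∀ t ∈ Ioi (0:ℝ), HasDerivWithinAt (fun t : ℝ => b^2/t) (-(b^2)/t^2) (Ioi 0) t := by
    intro t ht
    have ht0 : (0:ℝ) < t := ht
    have h := (hasDerivAt_inv (ne_of_gt ht0)).const_mul (b^2)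
    have h2 : HasDerivAt (fun t : ℝ => b^2/t) (-(b^2)/t^2) t := by
      simp only [div_eq_mul_inv]
      refine h.congr_deriv ?_
      field_simp
    exact h2.hasDerivWithinAt
  have hinj : InjOn (fun t : ℝ => b^2/t) (Ioi 0) := by
    intro x hx y hy h
    have hx0 : (0:ℝ) < x := hx
    have hy0 : (0:ℝ) < y := hy
    field_simp at h
    exact h.symm
  have key := integral_image_eq_integral_abs_deriv_smul measurableSet_Ioi hderiv hinj
    (igF a b (-(3:ℝ)/2))
  rw [himg] at key
  have key2 : ∫ t in Ioi (0:ℝ), |(-(b^2)/t^2)| • igF a b (-(3:ℝ)/2) (b^2/t)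
      = ∫ t in Ioi (0:ℝ), b⁻¹ * igF a b (-(1:ℝ)/2) t := by
    apply setIntegral_congr_fun measurableSet_Ioi
    intro t ht
    have ht0 : (0:ℝ) < t := ht
    have habs : |(-(b^2)/t^2)| = b^2/t^2 := by
      rw [neg_div, abs_neg, abs_of_pos (by positivity)]
    have hEeq : igE a b (b^2/t) = igE a b t := by
      unfold igE; field_simp; ring
    have hr : (b^2/t) ^ (-(3:ℝ)/2) = t ^ ((3:ℝ)/2) / b^3 := by
      rw [show (-(3:ℝ)/2) = -((3:ℝ)/2) by norm_num, Real.rpow_neg (by positivity),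
        Real.div_rpow (by positivity) ht0.le, inv_div]
      congr 1
      rw [← Real.rpow_natCast b 2, ← Real.rpow_mul hb.le, ← Real.rpow_natCast b 3]
      norm_num
    simp only [smul_eq_mul, igF, habs, hEeq, hr]
    rw [show (-(1:ℝ)/2) = (3:ℝ)/2 - 2 by norm_num, Real.rpow_sub ht0,
      show ((2:ℝ):ℝ) = ((2:ℕ):ℝ) by norm_num, Real.rpow_natCast]
    field_simp
  have key3 : (∫ t in Ioi (0:ℝ), igF a b (-(3:ℝ)/2) t)
      = b⁻¹ * ∫ t in Ioi (0:ℝ), igF a b (-(1:ℝ)/2) t := by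
    rw [key, key2, integral_const_mul]
  unfold igJ
  rw [key3]
  field_simp

lemma igJ_neg32 (a b : ℝ) (ha : 0 < a) (hb : 0 < b) :
    Real.sqrt a * igJ a b (-(3:ℝ)/2) = Real.sqrt (2*π) := by
  set φ : ℝ → ℝ := fun t => Real.sqrt a * (t ^ ((1:ℝ)/2) / b - t ^ (-(1:ℝ)/2)) with hφ
  set φ' : ℝ → ℝ := fun t =>
    Real.sqrt a * ((1/2) * t ^ (-(1:ℝ)/2) / b + (1/2) * t ^ (-(3:ℝ)/2)) with hφ'
  have hsa : (0:ℝ) < Real.sqrt a := Real.sqrt_pos.mpr ha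
  have hderiv : ∀ t ∈ Ioi (0:ℝ), HasDerivWithinAt φ (φ' t) (Ioi 0) t := by
    intro t ht
    have ht0 : (0:ℝ) < t := ht
    have h1 : HasDerivAt (fun t : ℝ => t ^ ((1:ℝ)/2)) ((1/2) * t ^ (-(1:ℝ)/2)) t := by
      have := Real.hasDerivAt_rpow_const (p := (1:ℝ)/2) (Or.inl ht0.ne')
      rwa [show (1:ℝ)/2 - 1 = -(1:ℝ)/2 by norm_num] at this
    have h2 : HasDerivAt (fun t : ℝ => t ^ (-(1:ℝ)/2)) ((-(1:ℝ)/2) * t ^ (-(3:ℝ)/2)) t := by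
      have := Real.hasDerivAt_rpow_const (p := -(1:ℝ)/2) (Or.inl ht0.ne')
      rwa [show -(1:ℝ)/2 - 1 = -(3:ℝ)/2 by norm_num] at this
    have h3 := ((h1.div_const b).sub h2).const_mul (Real.sqrt a)
    have : HasDerivAt φ (φ' t) t := by
      refine h3.congr_deriv ?_
      simp only [hφ']
      ring
    exact this.hasDerivWithinAt
  have hmono : StrictMonoOn φ (Ioi 0) := by
    intro x hx y hy hxy
    have hx0 : (0:ℝ) < x := hx
    have hy0 : (0:ℝ) < y := hy
    have h1 : x ^ ((1:ℝ)/2) < y ^ ((1:ℝ)/2) :=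
      Real.rpow_lt_rpow hx0.le hxy (by norm_num)
    have h2 : y ^ (-(1:ℝ)/2) < x ^ (-(1:ℝ)/2) :=
      Real.rpow_lt_rpow_of_neg hx0 hxy (by norm_num)
    simp only [hφ]
    apply mul_lt_mul_of_pos_left _ hsa
    have h3 : x ^ ((1:ℝ)/2) / b < y ^ ((1:ℝ)/2) / b := by
      exact div_lt_div_of_pos_right h1 hb
    linarith
  have himg : φ '' Ioi 0 = univ := by
    apply eq_univ_iff_forall.mpr
    intro u
    set S := Real.sqrt (u^2 + 4*a/b) with hS
    have hS0 : 0 ≤ S := Real.sqrt_nonneg _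
    have hS2 : S^2 = u^2 + 4*a/b := Real.sq_sqrt (by positivity)
    have habs : |u| < S := by
      have h1 : Real.sqrt (u^2) < S := by
        apply Real.sqrt_lt_sqrt (by positivity)
        have : 0 < 4*a/b := by positivity
        linarith
      rwa [Real.sqrt_sq_eq_abs] at h1
    have hx0 : 0 < (u + S) * b / (2 * Real.sqrt a) := by
      have := neg_abs_le u
      have hus : 0 < u + S := by linarith
      positivity
    set x := (u + S) * b / (2 * Real.sqrt a) with hxdef
    refine ⟨x^2, mem_Ioi.mpr (by positivity), ?_⟩
    have h12 : (x^2 : ℝ) ^ ((1:ℝ)/2) = x := by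
      rw [← Real.rpow_natCast x 2, ← Real.rpow_mul hx0.le]
      norm_num
    have h12' : (x^2 : ℝ) ^ (-(1:ℝ)/2) = x⁻¹ := by
      rw [← Real.rpow_natCast x 2, ← Real.rpow_mul hx0.le]
      norm_num
      rw [Real.rpow_neg_one]
    have hya : Real.sqrt a ^ 2 = a := Real.sq_sqrt ha.le
    have hS2' : S^2 * b = u^2 * b + 4*a := by
      rw [hS2]; field_simp
    have hkey : Real.sqrt a * (x^2 - b) = u * b * x := by
      rw [hxdef]
      field_simp
      linear_combination hS2' - 4 * hya
    have hxne : x ≠ 0 := hx0.ne'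
    clear_value x
    simp only [hφ, h12, h12']
    field_simp
    linear_combination hkey
  have hinj : InjOn φ (Ioi 0) := hmono.injOn
  have key := integral_image_eq_integral_abs_deriv_smul measurableSet_Ioi hderiv hinj
    (fun u => Real.exp (-(1/2) * u^2))
  rw [himg] at key
  have hgauss : (∫ u in (univ : Set ℝ), Real.exp (-(1/2) * u^2)) = Real.sqrt (2*π) := by
    rw [setIntegral_univ]
    rw [show (fun u : ℝ => Real.exp (-(1/2) * u^2)) = fun u : ℝ => Real.exp (-((1:ℝ)/2) * u^2)
      by norm_num]
    rw [integral_gaussian, show π / ((1:ℝ)/2) = 2*π by ring]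
  have hRHS : (∫ t in Ioi (0:ℝ), |φ' t| • Real.exp (-(1/2) * (φ t)^2))
      = ∫ t in Ioi (0:ℝ), ((Real.sqrt a/2 * b⁻¹) * igF a b (-(1:ℝ)/2) t
        + (Real.sqrt a/2) * igF a b (-(3:ℝ)/2) t) := by
    apply setIntegral_congr_fun measurableSet_Ioi
    intro t ht
    have ht0 : (0:ℝ) < t := ht
    have hppos : 0 < φ' t := by
      simp only [hφ']
      have h1 : 0 < t ^ (-(1:ℝ)/2) := Real.rpow_pos_of_pos ht0 _
      have h2 : 0 < t ^ (-(3:ℝ)/2) := Real.rpow_pos_of_pos ht0 _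
      positivity
    have hya : Real.sqrt a ^ 2 = a := Real.sq_sqrt ha.le
    have hE : -(1/2) * (φ t)^2 = igE a b t := by
      have hneg : t ^ (-(1:ℝ)/2) = (t ^ ((1:ℝ)/2))⁻¹ := by
        rw [show -(1:ℝ)/2 = -((1:ℝ)/2) by norm_num, Real.rpow_neg ht0.le]
      have hu2 : (t ^ ((1:ℝ)/2))^2 = t := by
        rw [← Real.rpow_natCast (t ^ ((1:ℝ)/2)) 2, ← Real.rpow_mul ht0.le]
        norm_num
      have hu0 : 0 < t ^ ((1:ℝ)/2) := Real.rpow_pos_of_pos ht0 _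
      simp only [hφ, hneg]
      set u := t ^ ((1:ℝ)/2) with hu
      rw [igE, ← hu2]
      field_simp
      linear_combination (-(u^2-b)^2) * hya
    simp only [smul_eq_mul]
    rw [abs_of_pos hppos, hE]
    simp only [hφ', igF]
    ring
  rw [hgauss, hRHS] at key
  have i1 : Integrable (fun t => (Real.sqrt a/2 * b⁻¹) * igF a b (-(1:ℝ)/2) t)
      (volume.restrict (Ioi 0)) :=
    (igF_integrable a b ha hb (-(1:ℝ)/2)).const_mul _
  have i2 : Integrable (fun t => (Real.sqrt a/2) * igF a b (-(3:ℝ)/2) t)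
      (volume.restrict (Ioi 0)) :=
    (igF_integrable a b ha hb (-(3:ℝ)/2)).const_mul _
  rw [integral_add i1 i2, integral_const_mul, integral_const_mul] at key
  have hhalf := igJ_half a b ha hb
  rw [← igJ, ← igJ, hhalf] at key
  rw [key]
  field_simp
  ring

lemma igMoment_eq (a b : ℝ) (ha : 0 < a) (hb : 0 < b) (n : ℕ) :
    igMoment a b n = (Real.sqrt a / Real.sqrt (2*π)) * igJ a b ((n:ℝ) - 3/2) := by
  rw [igMoment, igJ, ← integral_const_mul]
  apply setIntegral_congr_fun measurableSet_Ioi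
  intro t ht
  have ht0 : (0:ℝ) < t := ht
  have hpi : (0:ℝ) < π := Real.pi_pos
  have h1 : Real.sqrt (a / (2 * π * t ^ 3))
      = (Real.sqrt a / Real.sqrt (2*π)) / t ^ ((3:ℝ)/2) := by
    rw [show 2 * π * t ^ 3 = (2*π) * t^3 by ring, ← div_div,
      Real.sqrt_div (by positivity : (0:ℝ) ≤ a / (2*π))]
    congr 1
    · exact Real.sqrt_div ha.le _
    · rw [Real.sqrt_eq_rpow, ← Real.rpow_natCast t 3, ← Real.rpow_mul ht0.le]
      norm_num
  show t ^ n * ig a b t = _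
  rw [ig, h1]
  rw [show Real.exp (-(a * (t - b) ^ 2) / (2 * b ^ 2 * t)) = Real.exp (igE a b t) from rfl]
  simp only [igF]
  rw [show ((n:ℝ) - 3/2) = (n:ℝ) - (3:ℝ)/2 by norm_num, Real.rpow_sub ht0,
    Real.rpow_natCast]
  field_simp

theorem ig_moment_recursion (a b : ℝ) (ha : 0 < a) (hb : 0 < b) :
    igMoment a b 0 = 1 ∧ igMoment a b 1 = b ∧
      ∀ n : ℕ, 1 ≤ n →
        igMoment a b (n + 1) =
          (2 * (n : ℝ) - 1) * b ^ 2 / a * igMoment a b n + b ^ 2 * igMoment a b (n - 1) := by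
  have hpi : (0:ℝ) < π := Real.pi_pos
  have hs2 : (0:ℝ) < Real.sqrt (2*π) := Real.sqrt_pos.mpr (by positivity)
  have hsa : (0:ℝ) < Real.sqrt a := Real.sqrt_pos.mpr ha
  have hJ32 : igJ a b (-(3:ℝ)/2) = Real.sqrt (2*π) / Real.sqrt a := by
    rw [eq_div_iff hsa.ne']
    linear_combination igJ_neg32 a b ha hb
  have h0 : igMoment a b 0 = 1 := by
    rw [igMoment_eq a b ha hb 0]
    rw [show ((0:ℕ):ℝ) - 3/2 = -(3:ℝ)/2 by norm_num, hJ32]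
    field_simp
  have h1 : igMoment a b 1 = b := by
    rw [igMoment_eq a b ha hb 1]
    rw [show ((1:ℕ):ℝ) - 3/2 = -(1:ℝ)/2 by norm_num, igJ_half a b ha hb, hJ32]
    field_simp
  refine ⟨h0, h1, ?_⟩
  intro n hn
  have hn1 : (1:ℝ) ≤ (n:ℝ) := by exact_mod_cast hn
  have hs : ((n:ℝ) - 1/2) ≠ 0 := by linarith
  have rel := igJ_relation a b ha hb ((n:ℝ) - 1/2) hs
  rw [igMoment_eq a b ha hb (n+1), igMoment_eq a b ha hb n, igMoment_eq a b ha hb (n-1)]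
  rw [show ((n+1:ℕ):ℝ) - 3/2 = (n:ℝ) - 1/2 by push_cast; ring,
    show ((n-1:ℕ):ℝ) - 3/2 = (n:ℝ) - 1/2 - 2 by rw [Nat.cast_sub hn]; push_cast; ring,
    show (n:ℝ) - 3/2 = (n:ℝ) - 1/2 - 1 by ring]
  set s : ℝ := (n:ℝ) - 1/2 with hsdef
  have hsolve : igJ a b s = 2*b^2/a * (s * igJ a b (s-1)) + b^2 * igJ a b (s-2) := by
    have hcancel : 2*b^2/a * (a/(2*b^2)) = 1 := by field_simp
    have hcancel2 : 2*b^2/a * (a/2) = b^2 := by field_simp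
    linear_combination (-(2*b^2/a)) * rel - igJ a b s * hcancel
      + igJ a b (s-2) * hcancel2
  rw [hsolve]
  have : (2 * (n:ℝ) - 1) = 2 * s := by rw [hsdef]; ring
  rw [this]
  ring

end IGaux
end

section
/- Let a, b > 0, α > −1, β > 0. Let g be the inverse Gaussian density IG(a,b) and f_{α,β} the Gamma density. Then the function t ↦ g(t)²/f_{α,β}(t) is integrable on (0, ∞) if and only if β ≤ a/b²; moreover ∫₀^∞ g(t)²/f_{α,β}(t) dt = (a Γ(α+1) e^{2a/b} / (2π β^{α+1})) · ∫₀^∞ t^{−(α+3)} exp(−At − a/t) dt, where A = a/b² − β. -/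
open MeasureTheory Real

/-- The Gamma density `f_{α,β}(t) = β (βt)^α e^{-βt} / Γ(α+1)`. -/
noncomputable def gammaPdf (α β t : ℝ) : ℝ :=
  β * (β * t) ^ α * Real.exp (-β * t) / Real.Gamma (α + 1)

lemma pow_le_factorial_mul_exp {x : ℝ} (hx : 0 ≤ x) (n : ℕ) :
    x ^ n ≤ (n.factorial : ℝ) * Real.exp x := by
  have h1 : x ^ n / (n.factorial : ℝ) ≤ Real.exp x := by
    refine le_trans ?_ (Real.sum_le_exp_of_nonneg hx (n + 1))
    have := Finset.single_le_sum (f := fun i => x ^ i / (i.factorial : ℝ))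
      (fun i _ => by positivity) (Finset.self_mem_range_succ n)
    simpa using this
  have hn : (0:ℝ) < (n.factorial : ℝ) := by positivity
  calc x ^ n = x ^ n / (n.factorial : ℝ) * (n.factorial : ℝ) := by field_simp
    _ ≤ Real.exp x * (n.factorial : ℝ) := by gcongr
    _ = (n.factorial : ℝ) * Real.exp x := by ring

lemma ig_pointwise (a b α β : ℝ) (ha : 0 < a) (hb : 0 < b) (hα : -1 < α) (hβ : 0 < β)
    {t : ℝ} (ht : 0 < t) :
    ig a b t ^ 2 / gammaPdf α β t =
      a * Real.Gamma (α + 1) * Real.exp (2 * a / b) / (2 * Real.pi * β ^ (α + 1)) *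
        (t ^ (-(α + 3)) * Real.exp (-(a / b ^ 2 - β) * t - a / t)) := by
  have hπ : (0:ℝ) < Real.pi := Real.pi_pos
  have hG : 0 < Real.Gamma (α + 1) := Real.Gamma_pos_of_pos (by linarith)
  set u := -(a * (t - b) ^ 2) / (2 * b ^ 2 * t) with hu
  have h1 : ig a b t ^ 2 = a / (2 * Real.pi * t ^ 3) * Real.exp (u + u) := by
    rw [ig, mul_pow, Real.sq_sqrt (by positivity), sq, ← Real.exp_add]
  have h2 : gammaPdf α β t =
      β ^ (α + 1) * t ^ α * Real.exp (-β * t) / Real.Gamma (α + 1) := by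
    rw [gammaPdf, Real.mul_rpow hβ.le ht.le, Real.rpow_add_one hβ.ne']
    ring
  have h3 : t ^ (-(α + 3)) = (t ^ α * t ^ (3:ℕ))⁻¹ := by
    rw [← Real.rpow_natCast t 3, ← Real.rpow_add ht, ← Real.rpow_neg ht.le]
    norm_num
  have h4 : Real.exp (u + u) =
      Real.exp (2 * a / b) * Real.exp (-(a / b ^ 2 - β) * t - a / t) * Real.exp (-β * t) := by
    rw [← Real.exp_add, ← Real.exp_add]
    congr 1
    rw [hu]
    field_simp
    ring
  rw [h1, h2, h4, h3]
  have htα : (0:ℝ) < t ^ α := Real.rpow_pos_of_pos ht α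
  have hβα : (0:ℝ) < β ^ (α + 1) := Real.rpow_pos_of_pos hβ (α + 1)
  have he1 := Real.exp_ne_zero (-β * t)
  field_simp

lemma integ_iff (a α A : ℝ) (ha : 0 < a) (hα : -1 < α) :
    IntegrableOn (fun t : ℝ => t ^ (-(α + 3)) * Real.exp (-A * t - a / t)) (Set.Ioi 0)
      ↔ 0 ≤ A := by
  have hmeas : Measurable (fun t : ℝ => t ^ (-(α + 3)) * Real.exp (-A * t - a / t)) := by
    fun_prop
  constructor
  · intro hI
    by_contra hA
    push_neg at hA
    set ε := -A with hε
    have hε0 : 0 < ε := by simp [hε]; linarith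
    have htend := tendsto_exp_mul_div_rpow_atTop (α + 3) ε hε0
    obtain ⟨T, hT⟩ := Filter.eventually_atTop.1 (htend.eventually_ge_atTop 1)
    set T' := max T 1 with hT'
    have hT'1 : (1:ℝ) ≤ T' := le_max_right _ _
    have hsub : Set.Ioi T' ⊆ Set.Ioi (0:ℝ) :=
      Set.Ioi_subset_Ioi (by linarith)
    have hIc : IntegrableOn (fun _ : ℝ => Real.exp (-a)) (Set.Ioi T') := by
      refine Integrable.mono (hI.mono_set hsub) aestronglyMeasurable_const ?_
      rw [ae_restrict_iff' measurableSet_Ioi]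
      refine Filter.Eventually.of_forall fun t htT => ?_
      have ht1 : (1:ℝ) ≤ t := le_trans hT'1 (le_of_lt htT)
      have ht : (0:ℝ) < t := by linarith
      have htp : (0:ℝ) < t ^ (α + 3) := Real.rpow_pos_of_pos ht _
      have hb1 : 1 ≤ Real.exp (ε * t) / t ^ (α + 3) :=
        hT t (le_trans (le_max_left _ _) (le_of_lt htT))
      have key : Real.exp (-a) ≤ t ^ (-(α + 3)) * Real.exp (-A * t - a / t) := by
        have h5 : Real.exp (ε * t - a) ≤ Real.exp (-A * t - a / t) := by
          apply Real.exp_le_exp.2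
          have : a / t ≤ a := by
            rw [div_le_iff₀ ht]; nlinarith
          simp only [hε] at *
          linarith
        have h6 : t ^ (-(α + 3)) = (t ^ (α + 3))⁻¹ := by
          rw [← Real.rpow_neg ht.le]
        calc Real.exp (-a) = 1 * Real.exp (-a) := by ring
          _ ≤ Real.exp (ε * t) / t ^ (α + 3) * Real.exp (-a) := by
              nlinarith [hb1, Real.exp_pos (-a)]
          _ = (t ^ (α + 3))⁻¹ * Real.exp (ε * t - a) := by
              rw [Real.exp_sub, Real.exp_neg]; field_simp
          _ ≤ (t ^ (α + 3))⁻¹ * Real.exp (-A * t - a / t) := by gcongr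
          _ = t ^ (-(α + 3)) * Real.exp (-A * t - a / t) := by rw [h6]
      rw [Real.norm_eq_abs, Real.norm_eq_abs, abs_of_pos (Real.exp_pos _),
        abs_of_nonneg (by positivity)]
      exact key
    rw [integrableOn_const_iff] at hIc
    rcases hIc with h | h
    · simp at h
    · simp [Real.volume_Ioi] at h
  · intro hA
    have hsplit : Set.Ioc (0:ℝ) 1 ∪ Set.Ioi 1 = Set.Ioi 0 :=
      Set.Ioc_union_Ioi_eq_Ioi zero_le_one
    rw [← hsplit]
    refine IntegrableOn.union ?_ ?_
    · -- on (0,1] : bounded by constant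
      obtain ⟨n, hn⟩ := exists_nat_ge (α + 3)
      have hC : IntegrableOn (fun _ : ℝ => (n.factorial : ℝ) / a ^ n) (Set.Ioc (0:ℝ) 1) :=
        integrableOn_const measure_Ioc_lt_top.ne
      refine Integrable.mono hC hmeas.aestronglyMeasurable ?_
      rw [ae_restrict_iff' measurableSet_Ioc]
      refine Filter.Eventually.of_forall fun t htm => ?_
      obtain ⟨ht, ht1⟩ := htm
      have key : t ^ (-(α + 3)) * Real.exp (-A * t - a / t) ≤ (n.factorial : ℝ) / a ^ n := by
        have s1 : Real.exp (-A * t - a / t) ≤ Real.exp (-(a / t)) := by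
          apply Real.exp_le_exp.2
          have : 0 ≤ A * t := mul_nonneg hA ht.le
          linarith
        have s2 : t ^ (-(α + 3)) ≤ t ^ (-(n:ℝ)) :=
          Real.rpow_le_rpow_of_exponent_ge ht ht1 (by linarith)
        have s3 : t ^ (-(n:ℝ)) * Real.exp (-(a / t)) ≤ (n.factorial : ℝ) / a ^ n := by
          have hx : 0 ≤ a / t := by positivity
          have h7 := pow_le_factorial_mul_exp hx n
          rw [div_pow, div_le_iff₀ (by positivity : (0:ℝ) < t ^ n)] at h7
          have h8 : t ^ (-(n:ℝ)) = (t ^ n)⁻¹ := by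
            rw [← Real.rpow_natCast t n, ← Real.rpow_neg ht.le]
          have h9 : (0:ℝ) < t ^ n * Real.exp (a / t) := by positivity
          rw [h8, Real.exp_neg, ← mul_inv, ← one_div,
            div_le_div_iff₀ h9 (by positivity : (0:ℝ) < a ^ n), one_mul]
          nlinarith [h7]
        calc t ^ (-(α + 3)) * Real.exp (-A * t - a / t)
            ≤ t ^ (-(n:ℝ)) * Real.exp (-(a / t)) := by
              apply mul_le_mul s2 s1 (Real.exp_pos _).le
              positivity
          _ ≤ (n.factorial : ℝ) / a ^ n := s3
      rw [Real.norm_eq_abs, Real.norm_eq_abs, abs_of_nonneg (by positivity),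
        abs_of_nonneg (by positivity)]
      exact key
    · -- on (1,∞) : bounded by t ^ (-(α+3))
      refine Integrable.mono (integrableOn_Ioi_rpow_of_lt (show -(α + 3) < -1 by linarith) one_pos)
        hmeas.aestronglyMeasurable ?_
      rw [ae_restrict_iff' measurableSet_Ioi]
      refine Filter.Eventually.of_forall fun t htm => ?_
      have ht1 : (1:ℝ) < t := htm
      have ht : (0:ℝ) < t := by linarith
      have s1 : Real.exp (-A * t - a / t) ≤ 1 := by
        rw [← Real.exp_zero]
        apply Real.exp_le_exp.2
        have h1 : 0 ≤ A * t := mul_nonneg hA ht.le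
        have h2 : 0 ≤ a / t := by positivity
        linarith
      rw [Real.norm_eq_abs, Real.norm_eq_abs, abs_of_nonneg (by positivity),
        abs_of_nonneg (by positivity)]
      calc t ^ (-(α + 3)) * Real.exp (-A * t - a / t)
          ≤ t ^ (-(α + 3)) * 1 := by
            apply mul_le_mul_of_nonneg_left s1 (by positivity)
        _ = t ^ (-(α + 3)) := by ring

theorem ig_sq_div_gamma_integrable_iff (a b α β : ℝ) (ha : 0 < a) (hb : 0 < b)
    (hα : -1 < α) (hβ : 0 < β) :
    (IntegrableOn (fun t : ℝ => (ig a b t) ^ 2 / gammaPdf α β t) (Set.Ioi 0) ↔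
      β ≤ a / b ^ 2) ∧
    (∫ t in Set.Ioi (0 : ℝ), (ig a b t) ^ 2 / gammaPdf α β t) =
      a * Real.Gamma (α + 1) * Real.exp (2 * a / b) / (2 * Real.pi * β ^ (α + 1)) *
        ∫ t in Set.Ioi (0 : ℝ), t ^ (-(α + 3)) * Real.exp (-(a / b ^ 2 - β) * t - a / t) := by
  have hπ : (0:ℝ) < Real.pi := Real.pi_pos
  have hG : 0 < Real.Gamma (α + 1) := Real.Gamma_pos_of_pos (by linarith)
  set K := a * Real.Gamma (α + 1) * Real.exp (2 * a / b) / (2 * Real.pi * β ^ (α + 1)) with hK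
  have hK0 : 0 < K := by
    apply div_pos (mul_pos (mul_pos ha hG) (Real.exp_pos _))
    exact mul_pos (by positivity) (Real.rpow_pos_of_pos hβ _)
  have hcong : Set.EqOn (fun t : ℝ => (ig a b t) ^ 2 / gammaPdf α β t)
      (fun t : ℝ => K * (t ^ (-(α + 3)) * Real.exp (-(a / b ^ 2 - β) * t - a / t)))
      (Set.Ioi 0) := fun t ht => ig_pointwise a b α β ha hb hα hβ ht
  have hmul : IntegrableOn
      (fun t : ℝ => K * (t ^ (-(α + 3)) * Real.exp (-(a / b ^ 2 - β) * t - a / t)))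
      (Set.Ioi 0) ↔ IntegrableOn
      (fun t : ℝ => t ^ (-(α + 3)) * Real.exp (-(a / b ^ 2 - β) * t - a / t))
      (Set.Ioi 0) := by
    constructor
    · intro hI
      have := hI.const_mul K⁻¹
      simpa [inv_mul_cancel_left₀ hK0.ne', IntegrableOn] using this
    · intro hI
      exact hI.const_mul K
  constructor
  · rw [integrableOn_congr_fun hcong measurableSet_Ioi, hmul,
      integ_iff a α (a / b ^ 2 - β) ha hα]
    constructor <;> intro h <;> linarith
  · rw [setIntegral_congr_fun measurableSet_Ioi hcong, MeasureTheory.integral_const_mul]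
end

section
/- Let a, b > 0, α > −1, β > 0. Set ã = a/2, Ã = a/(2b²) − β, D = sqrt(ã/π) · e^{a/b} · Γ(α+1)/β^{α+1}, and define polynomials q_m (m ≥ 0) by q_0(t) = 1 and q_m(t) = q_{m−1}(t) · (2Ã t² + (4m−1+2α) t − 2ã) − 2t² q_{m−1}'(t). Let F(t) = g(t)/f_{α,β}(t) for t > 0, where g is the inverse Gaussian density IG(a,b) and f_{α,β} the Gamma density. Then for every m ≥ 0 and every t > 0, the m-th derivative of F satisfies F^{(m)}(t) = ((−1)^m / 2^m) · D · exp(−Ã t − ã/t) · t^{−2m − 3/2 − α} · q_m(t). -/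
open MeasureTheory Real Polynomial

/-- The polynomials `q_m` defined by `q_0 = 1` and
`q_m(t) = q_{m-1}(t)(2Ã t² + (4m-1+2α)t - 2ã) - 2t² q_{m-1}'(t)`. -/
noncomputable def qpoly (Atil atil α : ℝ) : ℕ → Polynomial ℝ
  | 0 => 1
  | m + 1 =>
      qpoly Atil atil α m *
          (Polynomial.C (2 * Atil) * Polynomial.X ^ 2 +
            Polynomial.C (4 * ((m : ℝ) + 1) - 1 + 2 * α) * Polynomial.X -
            Polynomial.C (2 * atil)) -
        Polynomial.C 2 * Polynomial.X ^ 2 * Polynomial.derivative (qpoly Atil atil α m)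

lemma hasDerivAt_aux (A c p : ℝ) (q : Polynomial ℝ) (t : ℝ) (ht : 0 < t) :
    HasDerivAt (fun s : ℝ => Real.exp (-A * s - c / s) * s ^ p * q.eval s)
      (Real.exp (-A * t - c / t) * t ^ (p - 2) *
        ((-A * t ^ 2 + c + p * t) * q.eval t + t ^ 2 * q.derivative.eval t)) t := by
  have h1 : HasDerivAt (fun s : ℝ => -A * s - c / s) (-A + c / t ^ 2) t := by
    have ha : HasDerivAt (fun s : ℝ => -A * s) (-A) t := by
      simpa using (hasDerivAt_id t).const_mul (-A)
    have hb : HasDerivAt (fun s : ℝ => c / s) (-(c / t ^ 2)) t := by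
      simpa [div_eq_mul_inv, mul_comm] using (hasDerivAt_inv ht.ne').const_mul c
    exact (ha.sub hb).congr_deriv (by ring)
  have h2 : HasDerivAt (fun s : ℝ => s ^ p) (p * t ^ (p - 1)) t :=
    Real.hasDerivAt_rpow_const (Or.inl ht.ne')
  have h3 := ((h1.exp.mul h2).mul (q.hasDerivAt t))
  refine h3.congr_deriv ?_
  simp only [Pi.mul_apply]
  have e1 : t ^ p = t ^ (p - 2) * t ^ 2 := by
    rw [← Real.rpow_natCast t 2, ← Real.rpow_add ht]; norm_num
  have e2 : t ^ (p - 1) = t ^ (p - 2) * t := by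
    rw [show t ^ (p-2) * t = t ^ (p-2) * t ^ (1:ℝ) by rw [Real.rpow_one], ← Real.rpow_add ht]
    ring_nf
  rw [e1, e2]
  field_simp

lemma base_aux (a b α β : ℝ) (ha : 0 < a) (hb : 0 < b)
    (hα : -1 < α) (hβ : 0 < β) (t : ℝ) (ht : 0 < t) :
    ig a b t / gammaPdf α β t =
      (Real.sqrt (a / 2 / Real.pi) * Real.exp (a / b) * Real.Gamma (α + 1) / β ^ (α + 1)) *
        (Real.exp (-(a / (2 * b ^ 2) - β) * t - (a / 2) / t) * t ^ (-(3:ℝ)/2 - α)) := by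
  have hπ := Real.pi_pos
  have hΓ : 0 < Real.Gamma (α + 1) := Real.Gamma_pos_of_pos (by linarith)
  have hsq : Real.sqrt (a / (2 * Real.pi * t ^ 3)) =
      Real.sqrt (a / 2 / Real.pi) * t ^ (-(3:ℝ)/2) := by
    rw [show a / (2 * Real.pi * t ^ 3) = (a / 2 / Real.pi) * (t ^ 3)⁻¹ by
      field_simp]
    rw [Real.sqrt_mul (by positivity), Real.sqrt_inv]
    congr 1
    rw [← Real.rpow_natCast t 3, Real.sqrt_eq_rpow, ← Real.rpow_mul ht.le,
      ← Real.rpow_neg ht.le]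
    norm_num
  have hmul : (β * t) ^ α = β ^ α * t ^ α := Real.mul_rpow hβ.le ht.le
  have hβ1 : β ^ (α + 1) = β ^ α * β := Real.rpow_add_one hβ.ne' α
  have hexp : Real.exp (-(a * (t - b) ^ 2) / (2 * b ^ 2 * t)) =
      Real.exp (a / b) * Real.exp (-(a / (2 * b ^ 2) - β) * t - (a / 2) / t) *
        Real.exp (-β * t) := by
    rw [← Real.exp_add, ← Real.exp_add]
    congr 1
    field_simp
    ring
  have hts : t ^ (-(3:ℝ)/2 - α) = t ^ (-(3:ℝ)/2) * (t ^ α)⁻¹ := by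
    rw [← Real.rpow_neg ht.le, ← Real.rpow_add ht]
    ring_nf
  have htα : (0:ℝ) < t ^ α := Real.rpow_pos_of_pos ht α
  have hβα : (0:ℝ) < β ^ α := Real.rpow_pos_of_pos hβ α
  rw [ig, gammaPdf, hsq, hmul, hexp, hts]
  rw [div_eq_iff (by positivity)]
  field_simp [hβ1]
  ring
  rw [add_comm 1 α, hβ1]; ring

theorem iteratedDeriv_ig_div_gamma (a b α β : ℝ) (ha : 0 < a) (hb : 0 < b)
    (hα : -1 < α) (hβ : 0 < β) (m : ℕ) (t : ℝ) (ht : 0 < t) :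
    iteratedDeriv m (fun s : ℝ => ig a b s / gammaPdf α β s) t =
      (-1 : ℝ) ^ m / 2 ^ m *
        (Real.sqrt (a / 2 / Real.pi) * Real.exp (a / b) * Real.Gamma (α + 1) / β ^ (α + 1)) *
        Real.exp (-(a / (2 * b ^ 2) - β) * t - (a / 2) / t) *
        t ^ (-(2 * (m : ℝ)) - 3 / 2 - α) *
        (qpoly (a / (2 * b ^ 2) - β) (a / 2) α m).eval t := by
  set A : ℝ := a / (2 * b ^ 2) - β with hA
  set D : ℝ := Real.sqrt (a / 2 / Real.pi) * Real.exp (a / b) * Real.Gamma (α + 1) / β ^ (α + 1)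
    with hD
  have key : ∀ m : ℕ, ∀ t : ℝ, 0 < t →
      iteratedDeriv m (fun s : ℝ => ig a b s / gammaPdf α β s) t =
        ((-1 : ℝ) ^ m / 2 ^ m * D) *
          (Real.exp (-A * t - (a / 2) / t) * t ^ (-(2 * (m : ℝ)) - 3 / 2 - α) *
            (qpoly A (a / 2) α m).eval t) := by
    intro m
    induction m with
    | zero =>
        intro t ht
        simp only [iteratedDeriv_zero, pow_zero, qpoly, Polynomial.eval_one]
        rw [base_aux a b α β ha hb hα hβ t ht]
        rw [show (-(2 * ((0:ℕ) : ℝ)) - 3 / 2 - α) = -(3:ℝ)/2 - α by push_cast; ring]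
        ring
    | succ n ih =>
        intro t ht
        rw [iteratedDeriv_succ]
        have hev : iteratedDeriv n (fun s : ℝ => ig a b s / gammaPdf α β s) =ᶠ[nhds t]
            (fun s => ((-1 : ℝ) ^ n / 2 ^ n * D) *
              (Real.exp (-A * s - (a / 2) / s) * s ^ (-(2 * (n : ℝ)) - 3 / 2 - α) *
                (qpoly A (a / 2) α n).eval s)) := by
          filter_upwards [isOpen_Ioi.mem_nhds (Set.mem_Ioi.mpr ht)] with s hs
          exact ih s hs
        rw [hev.deriv_eq]
        have hd := ((hasDerivAt_aux A (a / 2) (-(2 * (n : ℝ)) - 3 / 2 - α)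
          (qpoly A (a / 2) α n) t ht).const_mul ((-1 : ℝ) ^ n / 2 ^ n * D)).deriv
        rw [hd]
        have hexp2 : t ^ (-(2 * ((n:ℕ) + 1 : ℝ)) - 3 / 2 - α) =
            t ^ (-(2 * (n : ℝ)) - 3 / 2 - α - 2) := by
          congr 1; ring
        push_cast
        rw [hexp2]
        simp only [qpoly, Polynomial.eval_sub, Polynomial.eval_mul, Polynomial.eval_add,
          Polynomial.eval_pow, Polynomial.eval_C, Polynomial.eval_X]
        push_cast
        ring
  rw [key m t ht]
  ring
end

section
/- Let a, b > 0, α > −1, β > 0 with β < a/b², and let F(t) = g(t)/f_{α,β}(t) for t > 0, where g is the inverse Gaussian density IG(a,b) and f_{α,β} the Gamma density. Then for every integer m ≥ 0, the function t ↦ t^m · (F^{(m)}(t))² · f_{α,β}(t) is integrable on (0, ∞), where F^{(m)} denotes the m-th derivative of F. -/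
open MeasureTheory Real

section Aux
open Set Polynomial

noncomputable def Fg (K γ c d : ℝ) (t : ℝ) : ℝ := K * t ^ γ * Real.exp (c * t + d / t)

lemma hasDerivAt_Fg (K γ c d t : ℝ) (ht : 0 < t) :
    HasDerivAt (Fg K γ c d) (Fg K γ c d t * (γ / t + c - d / t ^ 2)) t := by
  have h1 : HasDerivAt (fun s : ℝ => s ^ γ) (γ * t ^ (γ - 1)) t :=
    Real.hasDerivAt_rpow_const (Or.inl ht.ne')
  have h2 : HasDerivAt (fun s : ℝ => c * s + d / s) (c - d / t ^ 2) t := by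
    have := ((hasDerivAt_id t).const_mul c).add ((hasDerivAt_inv ht.ne').const_mul d)
    refine this.congr_deriv ?_
    simp [div_eq_mul_inv]
    ring
  have h3 := ((h1.const_mul K).mul h2.exp)
  refine h3.congr_deriv ?_
  have hts : t ^ (γ - 1) = t ^ γ / t := by
    rw [Real.rpow_sub ht, Real.rpow_one]
  rw [hts]
  unfold Fg
  field_simp
  ring

lemma key_integrable (p ε δ : ℝ) (hε : 0 < ε) (hδ : 0 < δ) :
    IntegrableOn (fun t : ℝ => t ^ p * Real.exp (-ε * t - δ / t)) (Set.Ioi 0) := by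
  obtain ⟨n, hn⟩ : ∃ n : ℕ, -1 < p + n := ⟨⌈|p|⌉₊, by
    have := Nat.le_ceil |p|; have := neg_abs_le p; push_cast at *; linarith⟩
  have hmaj : IntegrableOn (fun t : ℝ => (Nat.factorial n / δ ^ n) * (t ^ (p + n) * Real.exp (-ε * t))) (Set.Ioi 0) := by
    refine Integrable.const_mul ?_ _
    have := integrableOn_rpow_mul_exp_neg_mul_rpow (p := 1) hn one_pos hε
    simp only [Real.rpow_one] at this
    exact this
  refine Integrable.mono' hmaj ?_ ?_
  · refine ContinuousOn.aestronglyMeasurable ?_ measurableSet_Ioi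
    refine ContinuousOn.mul ?_ ?_
    · exact fun x hx => (continuousWithinAt_id.rpow_const (Or.inl (ne_of_gt hx)))
    · refine Real.continuous_exp.comp_continuousOn ?_
      refine ContinuousOn.sub (by fun_prop) ?_
      exact continuousOn_const.div continuousOn_id (fun x hx => ne_of_gt hx)
  · rw [MeasureTheory.ae_restrict_iff' measurableSet_Ioi]
    filter_upwards with t ht
    rw [Set.mem_Ioi] at ht
    have htp : 0 < t ^ p := Real.rpow_pos_of_pos ht p
    have hexp : Real.exp (-ε * t - δ / t) = Real.exp (-ε * t) * Real.exp (-(δ / t)) := by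
      rw [← Real.exp_add]; ring_nf
    have hb1 : Real.exp (-(δ / t)) ≤ Nat.factorial n / δ ^ n * t ^ (n : ℕ) := by
      rw [Real.exp_neg]
      rw [inv_le_comm₀ (Real.exp_pos _) (by positivity)]
      have h2 := Real.pow_div_factorial_le_exp (x := δ / t) (by positivity) n
      calc ((Nat.factorial n : ℝ) / δ ^ n * t ^ (n:ℕ))⁻¹
          = (δ / t) ^ n / Nat.factorial n := by
            rw [div_pow]; field_simp
        _ ≤ Real.exp (δ / t) := h2
    have hnorm : ‖t ^ p * Real.exp (-ε * t - δ / t)‖ = t ^ p * Real.exp (-ε * t - δ / t) := by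
      rw [Real.norm_eq_abs, abs_of_nonneg (by positivity)]
    rw [hnorm, hexp]
    have htn : t ^ p * t ^ (n : ℕ) = t ^ (p + n) := by
      rw [← Real.rpow_natCast t n, ← Real.rpow_add ht]
    calc t ^ p * (Real.exp (-ε * t) * Real.exp (-(δ / t)))
        ≤ t ^ p * (Real.exp (-ε * t) * (Nat.factorial n / δ ^ n * t ^ (n:ℕ))) := by
          apply mul_le_mul_of_nonneg_left _ htp.le
          exact mul_le_mul_of_nonneg_left hb1 (Real.exp_pos _).le
      _ = Nat.factorial n / δ ^ n * (t ^ (p + n) * Real.exp (-ε * t)) := by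
          rw [← htn]; ring

noncomputable def Rp (γ c d : ℝ) : ℕ → Polynomial ℝ
  | 0 => 1
  | m + 1 => (C c * X ^ 2 + C γ * X - C d) * Rp γ c d m
      + X ^ 2 * (Rp γ c d m).derivative - C (2 * m : ℝ) * (X * Rp γ c d m)

lemma iteratedDeriv_rep (K γ c d : ℝ) (G : ℝ → ℝ) (hG : Set.EqOn G (Fg K γ c d) (Set.Ioi 0))
    (m : ℕ) : ∀ t ∈ Set.Ioi (0:ℝ),
      iteratedDeriv m G t = Fg K γ c d t * (Rp γ c d m).eval t / t ^ (2 * m) := by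
  induction m with
  | zero => intro t ht; simp [Rp, hG ht]
  | succ m ih =>
    intro t ht
    have ht0 : (0:ℝ) < t := ht
    rw [iteratedDeriv_succ]
    have hev : iteratedDeriv m G =ᶠ[nhds t]
        (fun s => Fg K γ c d s * (Rp γ c d m).eval s / s ^ (2 * m)) := by
      filter_upwards [isOpen_Ioi.mem_nhds ht] with s hs using ih s hs
    rw [hev.deriv_eq]
    simp only [mul_div_assoc]
    have hR : HasDerivAt (fun s : ℝ => (Rp γ c d m).eval s)
        ((Rp γ c d m).derivative.eval t) t := (Rp γ c d m).hasDerivAt t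
    have hpow : HasDerivAt (fun s : ℝ => s ^ (2 * m)) ((2 * m : ℕ) * t ^ (2 * m - 1)) t :=
      hasDerivAt_pow (2 * m) t
    have hdiv : HasDerivAt (fun s : ℝ => (Rp γ c d m).eval s / s ^ (2 * m))
        (((Rp γ c d m).derivative.eval t * t ^ (2 * m)
          - (Rp γ c d m).eval t * ((2 * m : ℕ) * t ^ (2 * m - 1))) / (t ^ (2 * m)) ^ 2) t :=
      hR.div hpow (pow_ne_zero _ ht0.ne')
    have hprod : HasDerivAt (fun s => Fg K γ c d s * ((Rp γ c d m).eval s / s ^ (2 * m))) _ t := (hasDerivAt_Fg K γ c d t ht0).mul hdiv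
    rw [hprod.deriv]
    have hsub : ((2 * m : ℕ) : ℝ) * t ^ (2 * m - 1) * t = (2 * m : ℕ) * t ^ (2 * m) := by
      cases m with
      | zero => simp
      | succ k =>
        have h1 : 2 * (k + 1) - 1 = 2 * k + 1 := by omega
        have h2 : 2 * (k + 1) = (2 * k + 1) + 1 := by omega
        rw [h1, h2, pow_succ]; ring
    simp only [Rp, Polynomial.eval_sub, Polynomial.eval_add, Polynomial.eval_mul,
      Polynomial.eval_pow, Polynomial.eval_X, Polynomial.eval_C]
    have hpne : (t:ℝ) ^ (2*m) ≠ 0 := pow_ne_zero _ ht0.ne'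
    have hsub' : ((2 * m : ℕ) : ℝ) * t ^ (2 * m - 1) = ((2 * m : ℕ) : ℝ) * t ^ (2 * m) / t := by
      rw [eq_div_iff ht0.ne']; exact hsub
    rw [hsub']
    have h5 : t ^ (2 * (m+1)) = t ^ (2*m) * t ^ 2 := by ring
    rw [h5]
    generalize t ^ (2*m) = u at hpne ⊢
    push_cast
    field_simp
    ring
lemma ratio_eq (a b α β : ℝ) (ha : 0 < a) (hb : 0 < b) (hα : -1 < α) (hβ : 0 < β) :
    Set.EqOn (fun s => ig a b s / gammaPdf α β s)
      (Fg (Real.sqrt (a / (2 * Real.pi)) * Real.Gamma (α + 1) * Real.exp (a / b) / β ^ (α + 1))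
        (-(α + 3 / 2)) (β - a / (2 * b ^ 2)) (-(a / 2))) (Set.Ioi 0) := by
  intro t ht
  have ht0 : (0:ℝ) < t := ht
  have hπ : (0:ℝ) < Real.pi := Real.pi_pos
  have hΓ : 0 < Real.Gamma (α + 1) := Real.Gamma_pos_of_pos (by linarith)
  have hβα : (0:ℝ) < β ^ (α + 1) := Real.rpow_pos_of_pos hβ _
  have h1 : Real.sqrt (a / (2 * Real.pi * t ^ 3))
      = Real.sqrt (a / (2 * Real.pi)) * t ^ (-(3/2) : ℝ) := by
    have e1 : a / (2 * Real.pi * t ^ 3) = a / (2 * Real.pi) * (t ^ 3)⁻¹ := by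
      field_simp
    rw [e1, Real.sqrt_mul (by positivity), Real.sqrt_inv]
    congr 1
    rw [show Real.sqrt (t ^ 3) = t ^ ((3:ℝ)/2) by
      rw [Real.sqrt_eq_rpow, ← Real.rpow_natCast t 3, ← Real.rpow_mul ht0.le]
      norm_num]
    rw [← Real.rpow_neg ht0.le]
  have h2 : (β * t) ^ α = β ^ α * t ^ α := Real.mul_rpow hβ.le ht0.le
  have h3 : β ^ (α + 1) = β ^ α * β := by
    rw [Real.rpow_add hβ, Real.rpow_one]
  have h4 : t ^ (-(3/2) : ℝ) = t ^ (-(α + 3/2) : ℝ) * t ^ α := by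
    rw [← Real.rpow_add ht0]; norm_num
  have hExp : Real.exp (-(a * (t - b) ^ 2) / (2 * b ^ 2 * t))
      = Real.exp ((β - a / (2 * b ^ 2)) * t + -(a / 2) / t)
        * Real.exp (a / b) * Real.exp (-β * t) := by
    rw [← Real.exp_add, ← Real.exp_add]
    congr 1
    field_simp
    ring
  simp only [ig, gammaPdf, Fg, h1, h2, h3, h4, hExp]
  have hαt : (0:ℝ) < t ^ α := Real.rpow_pos_of_pos ht0 α
  have hat : (0:ℝ) < t ^ (-(α + 3/2) : ℝ) := Real.rpow_pos_of_pos ht0 _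
  have hβa : (0:ℝ) < β ^ α := Real.rpow_pos_of_pos hβ α
  field_simp
-- polynomial bound
lemma poly_bound (R : Polynomial ℝ) (t : ℝ) (ht : 0 ≤ t) :
    |R.eval t| ≤ (∑ i ∈ Finset.range (R.natDegree + 1), |R.coeff i|) * (1 + t ^ R.natDegree) := by
  rw [Polynomial.eval_eq_sum_range]
  calc |∑ i ∈ Finset.range (R.natDegree + 1), R.coeff i * t ^ i|
      ≤ ∑ i ∈ Finset.range (R.natDegree + 1), |R.coeff i * t ^ i| := Finset.abs_sum_le_sum_abs _ _
    _ ≤ ∑ i ∈ Finset.range (R.natDegree + 1), |R.coeff i| * (1 + t ^ R.natDegree) := by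
        refine Finset.sum_le_sum fun i hi => ?_
        rw [abs_mul]
        refine mul_le_mul_of_nonneg_left ?_ (abs_nonneg _)
        rw [abs_of_nonneg (pow_nonneg ht i)]
        rcases le_or_gt t 1 with h | h
        · have : t ^ i ≤ 1 := pow_le_one₀ ht h
          nlinarith [pow_nonneg ht R.natDegree]
        · have : t ^ i ≤ t ^ R.natDegree :=
            pow_le_pow_right₀ h.le (Nat.lt_succ_iff.mp (Finset.mem_range.mp hi))
          linarith
    _ = (∑ i ∈ Finset.range (R.natDegree + 1), |R.coeff i|) * (1 + t ^ R.natDegree) := by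
        rw [← Finset.sum_mul]

theorem integrable_weighted_iteratedDeriv (a b α β : ℝ) (ha : 0 < a) (hb : 0 < b)
    (hα : -1 < α) (hβ : 0 < β) (hβ2 : β < a / b ^ 2) (m : ℕ) :
    IntegrableOn
      (fun t : ℝ =>
        t ^ m * (iteratedDeriv m (fun s : ℝ => ig a b s / gammaPdf α β s) t) ^ 2 *
          gammaPdf α β t)
      (Set.Ioi 0) := by
  set γ : ℝ := -(α + 3/2) with hγ
  set c : ℝ := β - a/(2*b^2) with hc
  set d : ℝ := -(a/2) with hd
  set K : ℝ := Real.sqrt (a/(2*Real.pi)) * Real.Gamma (α+1) * Real.exp (a/b) / β ^ (α+1) with hK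
  have hEq := ratio_eq a b α β ha hb hα hβ
  have hrep := iteratedDeriv_rep K γ c d _ hEq m
  set R := Rp γ c d m with hRdef
  set D := R.natDegree with hD
  set B := ∑ i ∈ Finset.range (D+1), |R.coeff i| with hB
  have hB0 : 0 ≤ B := Finset.sum_nonneg fun i _ => abs_nonneg _
  have hΓ : 0 < Real.Gamma (α+1) := Real.Gamma_pos_of_pos (by linarith)
  have hβα : (0:ℝ) < β ^ (α+1) := Real.rpow_pos_of_pos hβ _
  set ε : ℝ := a/b^2 - β with hε
  have hε0 : 0 < ε := sub_pos.mpr hβ2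
  set r : ℝ := (m:ℝ) + 2*γ + α - 4*m with hr
  set C0 : ℝ := K^2 * β^(α+1) / Real.Gamma (α+1) with hC0
  have hC00 : 0 ≤ C0 := by positivity
  set E : ℝ → ℝ := fun t => C0 * (R.eval t)^2 * (t ^ r * Real.exp (-ε*t - a/t)) with hEdef
  have hEqOn : Set.EqOn E
      (fun t : ℝ => t ^ m * (iteratedDeriv m (fun s : ℝ => ig a b s / gammaPdf α β s) t) ^ 2 *
        gammaPdf α β t) (Set.Ioi 0) := by
    intro t ht
    have ht0 : (0:ℝ) < t := ht
    simp only
    rw [hrep t ht]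
    have h2 : (β*t)^α = β^α * t^α := Real.mul_rpow hβ.le ht0.le
    have h3 : β^(α+1) = β^α * β := by rw [Real.rpow_add hβ, Real.rpow_one]
    have hexp2 : Real.exp (c*t + d/t)^2 * Real.exp (-β*t) = Real.exp (-ε*t - a/t) := by
      rw [sq, ← Real.exp_add, ← Real.exp_add]
      congr 1
      rw [hc, hd, hε]
      field_simp
      ring
    have hpows : (t:ℝ)^(m:ℕ) * ((t^γ)^2) * t^α / ((t^(2*m))^2) = t ^ r := by
      rw [show ((t^γ)^2) = t^γ * t^γ from sq (t^γ) ▸ rfl]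
      rw [show ((t^(2*m))^2) = t^(4*m) by ring]
      rw [← Real.rpow_natCast t m, ← Real.rpow_natCast t (4*m)]
      rw [← Real.rpow_add ht0, ← Real.rpow_add ht0, ← Real.rpow_add ht0, ← Real.rpow_sub ht0]
      congr 1
      push_cast
      ring
    have hgp : gammaPdf α β t = β^α * β * t^α * Real.exp (-β*t) / Real.Gamma (α+1) := by
      rw [gammaPdf, h2]; ring
    calc E t = C0 * (R.eval t)^2 * (((t:ℝ)^(m:ℕ) * ((t^γ)^2) * t^α / ((t^(2*m))^2))
          * (Real.exp (c*t + d/t)^2 * Real.exp (-β*t))) := by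
          rw [hpows, hexp2]
      _ = t ^ m * (Fg K γ c d t * R.eval t / t ^ (2*m))^2 * gammaPdf α β t := by
          rw [hgp, hC0, h3, Fg]
          have h4 : (t:ℝ)^(2*m) ≠ 0 := pow_ne_zero _ ht0.ne'
          field_simp
  have hg : IntegrableOn (fun t : ℝ => C0 * (2*B^2) * (t ^ r * Real.exp (-ε*t - a/t))
      + C0 * (2*B^2) * (t ^ (r + 2*(D:ℝ)) * Real.exp (-ε*t - a/t))) (Set.Ioi 0) :=
    ((key_integrable r ε a hε0 ha).const_mul _).add
      ((key_integrable (r + 2*(D:ℝ)) ε a hε0 ha).const_mul _)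
  have hEint : IntegrableOn E (Set.Ioi 0) := by
    refine Integrable.mono' hg ?_ ?_
    · refine ContinuousOn.aestronglyMeasurable ?_ measurableSet_Ioi
      refine ContinuousOn.mul (continuousOn_const.mul (by fun_prop)) ?_
      refine ContinuousOn.mul ?_ ?_
      · exact fun x hx => (continuousWithinAt_id.rpow_const (Or.inl (ne_of_gt hx)))
      · refine Real.continuous_exp.comp_continuousOn ?_
        refine ContinuousOn.sub (by fun_prop) ?_
        exact continuousOn_const.div continuousOn_id (fun x hx => ne_of_gt hx)
    · rw [MeasureTheory.ae_restrict_iff' measurableSet_Ioi]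
      filter_upwards with t ht
      have ht0 : (0:ℝ) < t := ht
      have htr : (0:ℝ) < t ^ r := Real.rpow_pos_of_pos ht0 _
      have hexp0 : (0:ℝ) < Real.exp (-ε*t - a/t) := Real.exp_pos _
      have hEnn : 0 ≤ E t := by
        rw [hEdef]
        positivity
      rw [Real.norm_eq_abs, abs_of_nonneg hEnn]
      have hpb := poly_bound R t ht0.le
      have hsq : (R.eval t)^2 ≤ 2*B^2*(1 + t^(2*D)) := by
        have h1 : (R.eval t)^2 ≤ (B * (1 + t^D))^2 := by
          rw [← sq_abs]
          exact pow_le_pow_left₀ (abs_nonneg _) hpb 2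
        have h2 : t^(2*D) = (t^D)^2 := by rw [← pow_mul, Nat.mul_comm]
        nlinarith [sq_nonneg (t^D - 1), pow_nonneg ht0.le D, sq_nonneg B]
      have h2D : (t:ℝ)^(2*D) * t ^ r = t ^ (r + 2*(D:ℝ)) := by
        rw [← Real.rpow_natCast t (2*D), ← Real.rpow_add ht0]
        congr 1
        push_cast
        ring
      calc E t = C0 * (R.eval t)^2 * (t ^ r * Real.exp (-ε*t - a/t)) := rfl
        _ ≤ C0 * (2*B^2*(1 + t^(2*D))) * (t ^ r * Real.exp (-ε*t - a/t)) := by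
            refine mul_le_mul_of_nonneg_right ?_ (by positivity)
            exact mul_le_mul_of_nonneg_left hsq hC00
        _ = C0 * (2*B^2) * (t ^ r * Real.exp (-ε*t - a/t))
            + C0 * (2*B^2) * (((t:ℝ)^(2*D) * t ^ r) * Real.exp (-ε*t - a/t)) := by ring
        _ = C0 * (2*B^2) * (t ^ r * Real.exp (-ε*t - a/t))
            + C0 * (2*B^2) * (t ^ (r + 2*(D:ℝ)) * Real.exp (-ε*t - a/t)) := by rw [h2D]
  exact hEint.congr_fun hEqOn measurableSet_Ioi
end Aux
end

section
/- Let a, b > 0, α > −1, and β = a/b², and let F(t) = g(t)/f_{α,β}(t) for t > 0, where g is the inverse Gaussian density IG(a,b) and f_{α,β} the Gamma density. Then for every integer m ≥ 0, the function t ↦ t^m · (F^{(m)}(t))² · f_{α,β}(t) is integrable on (0, ∞) if and only if α > m − 2. -/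
open MeasureTheory Real Polynomial

/-- auxiliary polynomial recursion: `Q 0 = 1`, `Q (m+1)(u) = (l + p u + c u²) Q m (u) - u² (Q m)'(u)`. -/
noncomputable def auxQ (l p c : ℝ) : ℕ → Polynomial ℝ
  | 0 => 1
  | m + 1 => (C l + C p * X + C c * X ^ 2) * auxQ l p c m - X ^ 2 * (auxQ l p c m).derivative

lemma auxQ_eval_zero (l p c : ℝ) (m : ℕ) : (auxQ l p c m).eval 0 = l ^ m := by
  induction m with
  | zero => simp [auxQ]
  | succ n ih =>
      rw [auxQ]
      simp only [Polynomial.eval_sub, Polynomial.eval_mul, Polynomial.eval_add, Polynomial.eval_C,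
        Polynomial.eval_X, Polynomial.eval_pow, ih]
      ring

/-- the base function -/
noncomputable def auxG (K p l c : ℝ) (t : ℝ) : ℝ := K * t ^ p * Real.exp (l * t - c / t)

lemma auxG_hasDerivAt (K p l c t : ℝ) (ht : 0 < t) :
    HasDerivAt (auxG K p l c) (auxG K p l c t * (p / t + l + c / t ^ 2)) t := by
  have h1 : HasDerivAt (fun s : ℝ => s ^ p) (p * t ^ (p - 1)) t :=
    Real.hasDerivAt_rpow_const (Or.inl ht.ne')
  have h2 : HasDerivAt (fun s : ℝ => l * s - c / s) (l - c * (-(t ^ 2)⁻¹)) t := by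
    have := ((hasDerivAt_id t).const_mul l).sub ((hasDerivAt_inv ht.ne').const_mul c)
    have h' := this.congr_deriv (show l * 1 - c * -(t ^ 2)⁻¹ = l - c * (-(t ^ 2)⁻¹) by ring)
    refine h'.congr_of_eventuallyEq (Filter.Eventually.of_forall fun s => ?_)
    simp [div_eq_mul_inv]
  have h3 := h2.exp
  have h4 := (h1.const_mul K).mul h3
  convert (show HasDerivAt (auxG K p l c) _ t from h4) using 1
  have htp : t ^ (p - 1) = t ^ p / t := by
    rw [Real.rpow_sub ht, Real.rpow_one]
  rw [auxG, htp]
  field_simp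
  ring

lemma auxQ_eval_inv_hasDerivAt (Q : Polynomial ℝ) (t : ℝ) (ht : 0 < t) :
    HasDerivAt (fun s : ℝ => Q.eval s⁻¹) (Q.derivative.eval t⁻¹ * (-(t ^ 2)⁻¹)) t :=
  (Q.hasDerivAt t⁻¹).comp t (hasDerivAt_inv ht.ne')

/-- the main iterated derivative formula -/
lemma iteratedDeriv_auxG (K p l c : ℝ) (m : ℕ) :
    ∀ t : ℝ, 0 < t →
      iteratedDeriv m (auxG K p l c) t = auxG K p l c t * (auxQ l p c m).eval t⁻¹ := by
  induction m with
  | zero => intro t ht; simp [auxQ]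
  | succ n ih =>
    intro t ht
    rw [iteratedDeriv_succ]
    have hev : iteratedDeriv n (auxG K p l c) =ᶠ[nhds t]
        fun s => auxG K p l c s * (auxQ l p c n).eval s⁻¹ := by
      filter_upwards [Ioi_mem_nhds ht] with s hs
      exact ih s hs
    rw [hev.deriv_eq]
    have hd := (auxG_hasDerivAt K p l c t ht).mul
      (auxQ_eval_inv_hasDerivAt (auxQ l p c n) t ht)
    rw [(show HasDerivAt (fun s => auxG K p l c s * (auxQ l p c n).eval s⁻¹) _ t from hd).deriv]
    rw [auxQ]
    simp only [Polynomial.eval_sub, Polynomial.eval_mul, Polynomial.eval_add, Polynomial.eval_C,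
      Polynomial.eval_X, Polynomial.eval_pow]
    have ht2 : (t:ℝ) ≠ 0 := ht.ne'
    field_simp
    ring

lemma ig_eq (a b t : ℝ) (ha : 0 < a) (hb : 0 < b) (ht : 0 < t) :
    ig a b t = Real.sqrt (a / (2 * Real.pi)) * Real.exp (a / b) * t ^ (-(3/2) : ℝ) *
      Real.exp (-((a / b ^ 2) / 2) * t - (a / 2) / t) := by
  rw [ig]
  have h1 : a / (2 * Real.pi * t ^ 3) = (a / (2 * Real.pi)) * (t ^ 3)⁻¹ := by
    rw [div_eq_mul_inv, div_eq_mul_inv, mul_inv]; ring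
  rw [h1, Real.sqrt_mul (by positivity)]
  have h2 : Real.sqrt ((t ^ 3)⁻¹) = t ^ (-(3/2) : ℝ) := by
    rw [Real.sqrt_inv, ← Real.rpow_natCast t 3, Real.sqrt_eq_rpow, ← Real.rpow_mul ht.le,
      ← Real.rpow_neg ht.le]
    norm_num
  have h3 : -(a * (t - b) ^ 2) / (2 * b ^ 2 * t) =
      a / b + (-((a / b ^ 2) / 2) * t - (a / 2) / t) := by
    field_simp
    ring
  rw [h2, h3, Real.exp_add]
  ring

lemma gammaPdf_eq (α β t : ℝ) (hβ : 0 < β) (ht : 0 < t) :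
    gammaPdf α β t = β ^ (α + 1) * t ^ α * Real.exp (-β * t) / Real.Gamma (α + 1) := by
  rw [gammaPdf, Real.mul_rpow hβ.le ht.le, Real.rpow_add hβ, Real.rpow_one]
  ring

lemma F_eq_auxG (a b α t : ℝ) (ha : 0 < a) (hb : 0 < b) (hα : -1 < α) (ht : 0 < t) :
    ig a b t / gammaPdf α (a / b ^ 2) t =
      auxG (Real.sqrt (a / (2 * Real.pi)) * Real.exp (a / b) * Real.Gamma (α + 1) /
          (a / b ^ 2) ^ (α + 1))
        (-(3/2) - α) ((a / b ^ 2) / 2) (a / 2) t := by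
  have hβ : 0 < a / b ^ 2 := by positivity
  have hΓ : 0 < Real.Gamma (α + 1) := Real.Gamma_pos_of_pos (by linarith)
  rw [ig_eq a b t ha hb ht, gammaPdf_eq α _ t hβ ht, auxG]
  rw [show (-(3/2) - α : ℝ) = (-(3/2) : ℝ) + (-α) from by ring, Real.rpow_add ht,
    Real.rpow_neg ht.le α]
  have hexp : Real.exp ((a / b ^ 2) / 2 * t - a / 2 / t) =
      Real.exp (-((a / b ^ 2) / 2) * t - (a / 2) / t) / Real.exp (-(a / b ^ 2) * t) := by
    rw [← Real.exp_sub]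
    congr 1
    ring
  rw [hexp]
  have h1 : (t : ℝ) ^ α ≠ 0 := (Real.rpow_pos_of_pos ht α).ne'
  have h2 : ((a / b ^ 2 : ℝ)) ^ (α + 1) ≠ 0 := (Real.rpow_pos_of_pos hβ _).ne'
  generalize Real.exp (-((a / b ^ 2) / 2) * t - (a / 2) / t) = E1
  generalize hE2 : Real.exp (-(a / b ^ 2) * t) = E2
  have hE2' : E2 ≠ 0 := hE2 ▸ (Real.exp_pos _).ne'
  field_simp

lemma integrand_eq (a b α t : ℝ) (m : ℕ) (q : ℝ) (ha : 0 < a) (hb : 0 < b) (hα : -1 < α)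
    (ht : 0 < t) (K : ℝ) :
    t ^ m * (auxG K (-(3/2) - α) ((a / b ^ 2) / 2) (a / 2) t * q) ^ 2 *
        gammaPdf α (a / b ^ 2) t =
      (K ^ 2 * (a / b ^ 2) ^ (α + 1) / Real.Gamma (α + 1)) * t ^ ((m : ℝ) - 3 - α) *
        Real.exp (-a / t) * q ^ 2 := by
  have hβ : 0 < a / b ^ 2 := by positivity
  rw [gammaPdf_eq α _ t hβ ht, auxG]
  rw [show ((m : ℝ) - 3 - α) = (m : ℝ) + ((-(3/2) - α) + (-(3/2) - α)) + α from by ring]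
  rw [Real.rpow_add ht, Real.rpow_add ht, Real.rpow_add ht, Real.rpow_natCast]
  rw [show (-a / t : ℝ) = ((a / b ^ 2) / 2 * t - (a / 2) / t) +
      (((a / b ^ 2) / 2 * t - (a / 2) / t) + (-(a / b ^ 2) * t)) from by field_simp; ring]
  rw [Real.exp_add, Real.exp_add]
  ring

lemma abs_eval_le_of_one_le (Q : Polynomial ℝ) (u : ℝ) (hu : 1 ≤ u) :
    |Q.eval u| ≤ (∑ i ∈ Finset.range (Q.natDegree + 1), |Q.coeff i|) * u ^ Q.natDegree := by
  have hu0 : (0:ℝ) ≤ u := le_trans zero_le_one hu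
  rw [Polynomial.eval_eq_sum_range, Finset.sum_mul]
  refine (Finset.abs_sum_le_sum_abs _ _).trans (Finset.sum_le_sum fun i hi => ?_)
  rw [abs_mul, abs_pow, abs_of_nonneg hu0]
  refine mul_le_mul_of_nonneg_left ?_ (abs_nonneg _)
  exact pow_le_pow_right₀ hu (Nat.lt_succ_iff.mp (Finset.mem_range.mp hi))

lemma abs_eval_le_of_le_one (Q : Polynomial ℝ) (u : ℝ) (hu0 : 0 ≤ u) (hu : u ≤ 1) :
    |Q.eval u| ≤ ∑ i ∈ Finset.range (Q.natDegree + 1), |Q.coeff i| := by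
  rw [Polynomial.eval_eq_sum_range]
  refine (Finset.abs_sum_le_sum_abs _ _).trans (Finset.sum_le_sum fun i hi => ?_)
  rw [abs_mul, abs_pow, abs_of_nonneg hu0]
  calc |Q.coeff i| * u ^ i ≤ |Q.coeff i| * 1 := by
        refine mul_le_mul_of_nonneg_left (pow_le_one₀ hu0 hu) (abs_nonneg _)
    _ = |Q.coeff i| := mul_one _

lemma exp_neg_div_le (a t : ℝ) (ha : 0 < a) (ht : 0 < t) (N : ℕ) :
    Real.exp (-a / t) ≤ (N.factorial : ℝ) / a ^ N * t ^ N := by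
  have h1 : (a / t) ^ N / (N.factorial : ℝ) ≤ Real.exp (a / t) := by
    calc (a / t) ^ N / (N.factorial : ℝ)
        ≤ ∑ i ∈ Finset.range (N + 1), (a / t) ^ i / (i.factorial : ℝ) := by
          refine Finset.single_le_sum (f := fun i => (a / t) ^ i / (i.factorial : ℝ))
            (fun i _ => by positivity) (Finset.mem_range.mpr (Nat.lt_succ_self N))
      _ ≤ Real.exp (a / t) := Real.sum_le_exp_of_nonneg (by positivity) _
  have h2 : Real.exp (-a / t) = (Real.exp (a / t))⁻¹ := by
    rw [← Real.exp_neg]; ring_nf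
  rw [h2]
  calc (Real.exp (a / t))⁻¹ ≤ ((a / t) ^ N / (N.factorial : ℝ))⁻¹ :=
        inv_anti₀ (by positivity) h1
    _ = (N.factorial : ℝ) / a ^ N * t ^ N := by
        rw [div_pow]
        field_simp

lemma phi_integrable_iff (a s : ℝ) (ha : 0 < a) (Q : Polynomial ℝ) (hQ : Q.eval 0 ≠ 0) :
    IntegrableOn (fun t : ℝ => t ^ s * Real.exp (-a / t) * (Q.eval t⁻¹) ^ 2) (Set.Ioi 0)
      ↔ s < -1 := by
  set φ : ℝ → ℝ := fun t => t ^ s * Real.exp (-a / t) * (Q.eval t⁻¹) ^ 2 with hφ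
  have hcont : ContinuousOn φ (Set.Ioi 0) := by
    apply ContinuousOn.mul
    apply ContinuousOn.mul
    · exact fun t ht => (Real.continuousAt_rpow_const t s (Or.inl (ne_of_gt ht))).continuousWithinAt
    · exact (Real.continuous_exp.comp_continuousOn
        ((continuousOn_const.div continuousOn_id (fun t ht => ne_of_gt ht))))
    · exact ((Q.continuous.comp_continuousOn
        (ContinuousOn.inv₀ continuousOn_id fun t ht => ne_of_gt ht)).pow 2)
  have hφnn : ∀ t ∈ Set.Ioi (0:ℝ), 0 ≤ φ t := by
    intro t ht
    have : (0:ℝ) < t := ht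
    positivity
  set A : ℝ := ∑ i ∈ Finset.range (Q.natDegree + 1), |Q.coeff i| with hA
  have hAnn : 0 ≤ A := Finset.sum_nonneg fun i _ => abs_nonneg _
  constructor
  · -- integrable → s < -1
    intro hint
    obtain ⟨T, hT⟩ : ∃ T : ℝ, ∀ t ≥ T, (Q.eval 0) ^ 2 / 2 ≤ (Q.eval t⁻¹) ^ 2 := by
      have htend : Filter.Tendsto (fun t : ℝ => (Q.eval t⁻¹) ^ 2) Filter.atTop
          (nhds ((Q.eval 0) ^ 2)) := by
        exact ((Q.continuous.pow 2).tendsto 0).comp tendsto_inv_atTop_zero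
      have hlt : (Q.eval 0) ^ 2 / 2 < (Q.eval 0) ^ 2 := by
        have : (0:ℝ) < (Q.eval 0) ^ 2 := by positivity
        linarith
      exact Filter.eventually_atTop.mp (htend.eventually_const_le hlt)
    set T' := max T 1 with hT'
    have hT'1 : (1:ℝ) ≤ T' := le_max_right _ _
    have hT'0 : (0:ℝ) < T' := lt_of_lt_of_le one_pos hT'1
    have hsub : Set.Ioi T' ⊆ Set.Ioi (0:ℝ) := fun t ht => lt_trans hT'0 ht
    have hint' : IntegrableOn φ (Set.Ioi T') := hint.mono_set hsub
    set c : ℝ := (Real.exp (-a) * ((Q.eval 0) ^ 2 / 2))⁻¹ with hc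
    have hcpos : 0 < c := by positivity
    have hbound : ∀ t ∈ Set.Ioi T', ‖t ^ s‖ ≤ c * φ t := by
      intro t ht
      have ht1 : (1:ℝ) < t := lt_of_le_of_lt hT'1 ht
      have ht0 : (0:ℝ) < t := lt_trans one_pos ht1
      have h1 : Real.exp (-a) ≤ Real.exp (-a / t) := by
        apply Real.exp_le_exp.mpr
        rw [neg_div]
        apply neg_le_neg
        rw [div_le_iff₀ ht0]
        nlinarith
      have h2 : (Q.eval 0) ^ 2 / 2 ≤ (Q.eval t⁻¹) ^ 2 := hT t (le_trans (le_max_left _ _) ht.le)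
      have h3 : Real.exp (-a) * ((Q.eval 0) ^ 2 / 2) * (t ^ s) ≤ φ t := by
        rw [hφ]
        have hts : (0:ℝ) < t ^ s := Real.rpow_pos_of_pos ht0 s
        calc Real.exp (-a) * ((Q.eval 0) ^ 2 / 2) * t ^ s
            ≤ Real.exp (-a / t) * (Q.eval t⁻¹) ^ 2 * t ^ s := by
              refine mul_le_mul_of_nonneg_right (mul_le_mul h1 h2 (by positivity)
                (Real.exp_pos _).le) hts.le
          _ = t ^ s * Real.exp (-a / t) * (Q.eval t⁻¹) ^ 2 := by ring
      rw [Real.norm_eq_abs, abs_of_nonneg (Real.rpow_pos_of_pos ht0 s).le]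
      calc t ^ s = c * (Real.exp (-a) * ((Q.eval 0) ^ 2 / 2) * t ^ s) := by
            rw [hc]; field_simp
        _ ≤ c * φ t := mul_le_mul_of_nonneg_left h3 hcpos.le
    have hrpow_int : IntegrableOn (fun t : ℝ => t ^ s) (Set.Ioi T') := by
      refine Integrable.mono' (hint'.const_mul c) ?_ ?_
      · exact (ContinuousOn.aestronglyMeasurable (fun t ht =>
          (Real.continuousAt_rpow_const t s (Or.inl (ne_of_gt (lt_trans hT'0 ht)))).continuousWithinAt)
          measurableSet_Ioi)
      · exact (ae_restrict_iff' measurableSet_Ioi).mpr (Filter.Eventually.of_forall hbound)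
    exact (integrableOn_Ioi_rpow_iff hT'0).mp hrpow_int
  · -- s < -1 → integrable
    intro hs
    have hUnion : Set.Ioc (0:ℝ) 1 ∪ Set.Ioi 1 = Set.Ioi 0 := Set.Ioc_union_Ioi_eq_Ioi zero_le_one
    rw [← hUnion]
    apply IntegrableOn.union
    · -- on Ioc 0 1 : bounded
      set N : ℕ := ⌈2 * (Q.natDegree : ℝ) - s⌉₊ with hN
      have hNs : 2 * (Q.natDegree : ℝ) - s ≤ N := Nat.le_ceil _
      set M : ℝ := (N.factorial : ℝ) / a ^ N * A ^ 2 with hM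
      refine Integrable.mono' (g := fun _ => M) (integrable_const _) ?_ ?_
      · exact (hcont.mono (Set.Ioc_subset_Ioi_self)).aestronglyMeasurable measurableSet_Ioc
      · refine (ae_restrict_iff' measurableSet_Ioc).mpr (Filter.Eventually.of_forall ?_)
        intro t ht
        obtain ⟨ht0, ht1⟩ := ht
        rw [Real.norm_eq_abs, abs_of_nonneg (hφnn t ht0)]
        have hQb : |Q.eval t⁻¹| ≤ A * (t⁻¹) ^ Q.natDegree :=
          abs_eval_le_of_one_le Q t⁻¹ (one_le_inv_iff₀.mpr ⟨ht0, ht1⟩)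
        have hexp : Real.exp (-a / t) ≤ (N.factorial : ℝ) / a ^ N * t ^ N :=
          exp_neg_div_le a t ha ht0 N
        have hQb2 : (Q.eval t⁻¹) ^ 2 ≤ A ^ 2 * ((t⁻¹) ^ Q.natDegree) ^ 2 := by
          rw [← mul_pow]
          calc (Q.eval t⁻¹) ^ 2 = |Q.eval t⁻¹| ^ 2 := (sq_abs _).symm
            _ ≤ (A * (t⁻¹) ^ Q.natDegree) ^ 2 := by
                refine pow_le_pow_left₀ (abs_nonneg _) hQb 2
        have key : t ^ s * t ^ (N:ℝ) * ((t⁻¹) ^ Q.natDegree) ^ 2 ≤ 1 := by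
          have e1 : ((t⁻¹ : ℝ) ^ Q.natDegree) ^ 2 = t ^ (-(2 * (Q.natDegree : ℝ))) := by
            rw [← pow_mul, ← Real.rpow_natCast t⁻¹, ← Real.rpow_neg_one t,
              ← Real.rpow_mul ht0.le]
            congr 1
            push_cast
            ring
          have e2 : t ^ s * t ^ (N:ℝ) * ((t⁻¹) ^ Q.natDegree) ^ 2
              = t ^ (s + N - 2 * Q.natDegree) := by
            rw [e1, ← Real.rpow_add ht0, ← Real.rpow_add ht0, sub_eq_add_neg]
          rw [e2]
          refine Real.rpow_le_one ht0.le ht1 (by push_cast; linarith)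
        calc φ t = t ^ s * Real.exp (-a / t) * (Q.eval t⁻¹) ^ 2 := rfl
          _ ≤ t ^ s * ((N.factorial : ℝ) / a ^ N * t ^ N) * (A ^ 2 * ((t⁻¹) ^ Q.natDegree) ^ 2) := by
              refine mul_le_mul ?_ hQb2 (by positivity) (by positivity)
              exact mul_le_mul_of_nonneg_left hexp (Real.rpow_pos_of_pos ht0 s).le
          _ = ((N.factorial : ℝ) / a ^ N * A ^ 2) * (t ^ s * t ^ (N:ℝ) * ((t⁻¹) ^ Q.natDegree) ^ 2) := by
              rw [Real.rpow_natCast]; ring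
          _ ≤ ((N.factorial : ℝ) / a ^ N * A ^ 2) * 1 := by
              refine mul_le_mul_of_nonneg_left key (by positivity)
          _ = M := mul_one _
    · -- on Ioi 1 : dominated by A^2 * t^s
      have hrpow : IntegrableOn (fun t : ℝ => t ^ s) (Set.Ioi 1) :=
        (integrableOn_Ioi_rpow_iff one_pos).mpr hs
      refine Integrable.mono' (hrpow.const_mul (A ^ 2)) ?_ ?_
      · exact (hcont.mono (fun t (ht : 1 < t) => lt_trans one_pos ht)).aestronglyMeasurable
          measurableSet_Ioi
      · refine (ae_restrict_iff' measurableSet_Ioi).mpr (Filter.Eventually.of_forall ?_)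
        intro t ht
        have ht1 : (1:ℝ) < t := ht
        have ht0 : (0:ℝ) < t := lt_trans one_pos ht1
        rw [Real.norm_eq_abs, abs_of_nonneg (hφnn t ht0)]
        have hinv0 : 0 ≤ t⁻¹ := (inv_pos.mpr ht0).le
        have hinv1 : t⁻¹ ≤ 1 := by
          rw [inv_le_one_iff₀]; right; exact ht1.le
        have hQb : (Q.eval t⁻¹) ^ 2 ≤ A ^ 2 := by
          calc (Q.eval t⁻¹) ^ 2 = |Q.eval t⁻¹| ^ 2 := (sq_abs _).symm
            _ ≤ A ^ 2 := pow_le_pow_left₀ (abs_nonneg _) (abs_eval_le_of_le_one Q t⁻¹ hinv0 hinv1) 2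
        have hexp : Real.exp (-a / t) ≤ 1 := by
          rw [Real.exp_le_one_iff]
          rw [neg_div]
          simp only [neg_nonpos]
          positivity
        calc φ t = t ^ s * Real.exp (-a / t) * (Q.eval t⁻¹) ^ 2 := rfl
          _ ≤ t ^ s * 1 * A ^ 2 := by
              refine mul_le_mul ?_ hQb (by positivity) (by positivity)
              exact mul_le_mul_of_nonneg_left hexp (Real.rpow_pos_of_pos ht0 s).le
          _ = A ^ 2 * t ^ s := by ring

lemma iteratedDeriv_congr_on (f g : ℝ → ℝ) (hfg : ∀ x ∈ Set.Ioi (0:ℝ), f x = g x) (m : ℕ) :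
    ∀ t ∈ Set.Ioi (0:ℝ), iteratedDeriv m f t = iteratedDeriv m g t := by
  induction m with
  | zero => simpa using hfg
  | succ n ih =>
    intro t ht
    rw [iteratedDeriv_succ, iteratedDeriv_succ]
    apply Filter.EventuallyEq.deriv_eq
    filter_upwards [Ioi_mem_nhds ht] with s hs
    exact ih s hs

theorem integrable_weighted_iteratedDeriv_limit_case (a b α : ℝ) (ha : 0 < a) (hb : 0 < b)
    (hα : -1 < α) (m : ℕ) :
    IntegrableOn
      (fun t : ℝ =>
        t ^ m * (iteratedDeriv m (fun s : ℝ => ig a b s / gammaPdf α (a / b ^ 2) s) t) ^ 2 *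
          gammaPdf α (a / b ^ 2) t)
      (Set.Ioi 0) ↔ (m : ℝ) - 2 < α := by
  have hβ : 0 < a / b ^ 2 := by positivity
  have hΓ : 0 < Real.Gamma (α + 1) := Real.Gamma_pos_of_pos (by linarith)
  set K : ℝ := Real.sqrt (a / (2 * Real.pi)) * Real.exp (a / b) * Real.Gamma (α + 1) /
      (a / b ^ 2) ^ (α + 1) with hKdef
  have hK : 0 < K := by
    have h1 : 0 < Real.sqrt (a / (2 * Real.pi)) := Real.sqrt_pos.mpr (by positivity)
    have h2 : 0 < ((a / b ^ 2 : ℝ)) ^ (α + 1) := Real.rpow_pos_of_pos hβ _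
    positivity
  set l : ℝ := (a / b ^ 2) / 2 with hldef
  have hl : 0 < l := by positivity
  set Q : Polynomial ℝ := auxQ l (-(3/2) - α) (a / 2) m with hQdef
  have hQ0 : Q.eval 0 ≠ 0 := by
    rw [hQdef, auxQ_eval_zero]
    positivity
  set Cst : ℝ := K ^ 2 * (a / b ^ 2) ^ (α + 1) / Real.Gamma (α + 1) with hCdef
  have hC : 0 < Cst := by
    have h2 : 0 < ((a / b ^ 2 : ℝ)) ^ (α + 1) := Real.rpow_pos_of_pos hβ _
    positivity
  have hFG : ∀ t ∈ Set.Ioi (0:ℝ),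
      (fun s : ℝ => ig a b s / gammaPdf α (a / b ^ 2) s) t =
        auxG K (-(3/2) - α) l (a / 2) t := fun t ht =>
    F_eq_auxG a b α t ha hb hα ht
  have heq : Set.EqOn
      (fun t : ℝ =>
        t ^ m * (iteratedDeriv m (fun s : ℝ => ig a b s / gammaPdf α (a / b ^ 2) s) t) ^ 2 *
          gammaPdf α (a / b ^ 2) t)
      (fun t : ℝ => Cst * (t ^ ((m : ℝ) - 3 - α) * Real.exp (-a / t) * (Q.eval t⁻¹) ^ 2))
      (Set.Ioi 0) := by
    intro t ht
    have ht0 : (0:ℝ) < t := ht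
    have h1 : iteratedDeriv m (fun s : ℝ => ig a b s / gammaPdf α (a / b ^ 2) s) t =
        auxG K (-(3/2) - α) l (a / 2) t * Q.eval t⁻¹ := by
      rw [iteratedDeriv_congr_on _ _ hFG m t ht, hQdef]
      exact iteratedDeriv_auxG K (-(3/2) - α) l (a / 2) m t ht0
    simp only
    rw [h1, integrand_eq a b α t m (Q.eval t⁻¹) ha hb hα ht0 K]
    ring
  rw [integrableOn_congr_fun heq measurableSet_Ioi,
    IntegrableOn, integrable_const_mul_iff (isUnit_iff_ne_zero.mpr hC.ne') _,
    ← IntegrableOn, phi_integrable_iff a ((m : ℝ) - 3 - α) ha Q hQ0]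
  constructor <;> intro h <;> linarith
end

section
/- Let α > −1 and β ∈ ℝ, let (m_j)_{j≥1} be a sequence of real numbers, and define B_0^{(α)} = 1 and B_k^{(α)} = 1 + Σ_{j=1}^k C(k,j) (−β)^j m_j / ((α+j)_j) for k ≥ 1, where (α+j)_j = Π_{l=1}^j (α+l). Then for every k ≥ 1: B_k^{(α)} = Σ_{j=1}^k C(k,j) (−1)^{j+1} B_{k−j}^{(α)} + (−β)^k m_k / ((α+k)_k). -/
open Finset

lemma alt_sum_choose_real (n : ℕ) :
    ∑ j ∈ range (n + 1), (-1 : ℝ) ^ j * (n.choose j : ℝ) = if n = 0 then 1 else 0 := by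
  have h := Int.alternating_sum_range_choose (n := n)
  have h2 : ((∑ j ∈ range (n + 1), (-1 : ℤ) ^ j * (n.choose j : ℤ) : ℤ) : ℝ)
      = ((if n = 0 then 1 else 0 : ℤ) : ℝ) := by exact_mod_cast congrArg (Int.cast : ℤ → ℝ) h
  push_cast at h2
  simpa using h2

lemma choose_swap {i j k : ℕ} (h : i + j ≤ k) :
    k.choose j * (k - j).choose i = k.choose i * (k - i).choose j := by
  have h1 := Nat.choose_mul (n := k) (k := i + j) (s := j) (Nat.le_add_left j i)
  have h2 := Nat.choose_mul (n := k) (k := i + j) (s := i) (Nat.le_add_right i j)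
  have hsym : (i + j).choose j = (i + j).choose i := by
    rw [← Nat.choose_symm (Nat.le_add_right i j)]
    congr 1; omega
  have e1 : i + j - j = i := by omega
  have e2 : i + j - i = j := by omega
  rw [e1] at h1; rw [e2] at h2
  rw [← h1, hsym, h2]

/-- Binomial inversion. -/
lemma binomial_inversion (c : ℕ → ℝ) (k : ℕ) :
    ∑ j ∈ range (k + 1), (-1 : ℝ) ^ j * (k.choose j : ℝ) *
      (∑ i ∈ range (k - j + 1), ((k - j).choose i : ℝ) * c i) = c k := by
  have step1 : ∀ j ∈ range (k + 1), (-1 : ℝ) ^ j * (k.choose j : ℝ) *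
      (∑ i ∈ range (k - j + 1), ((k - j).choose i : ℝ) * c i)
      = ∑ i ∈ range (k - j + 1),
          (-1 : ℝ) ^ j * ((k.choose j : ℝ) * ((k - j).choose i : ℝ)) * c i := by
    intro j _
    rw [mul_sum]; apply sum_congr rfl; intro i _; ring
  rw [sum_congr rfl step1]
  have hswap : ∑ j ∈ range (k + 1), ∑ i ∈ range (k - j + 1),
        (-1 : ℝ) ^ j * ((k.choose j : ℝ) * ((k - j).choose i : ℝ)) * c i
      = ∑ i ∈ range (k + 1), ∑ j ∈ range (k - i + 1),
        (-1 : ℝ) ^ j * ((k.choose j : ℝ) * ((k - j).choose i : ℝ)) * c i := by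
    apply sum_comm'
    intro j i
    simp only [mem_range]
    omega
  rw [hswap]
  have step2 : ∀ i ∈ range (k + 1), ∑ j ∈ range (k - i + 1),
        (-1 : ℝ) ^ j * ((k.choose j : ℝ) * ((k - j).choose i : ℝ)) * c i
      = (k.choose i : ℝ) * c i * (if k - i = 0 then 1 else 0) := by
    intro i hi
    rw [mem_range] at hi
    have hterm : ∀ j ∈ range (k - i + 1),
        (-1 : ℝ) ^ j * ((k.choose j : ℝ) * ((k - j).choose i : ℝ)) * c i
        = (k.choose i : ℝ) * c i * ((-1 : ℝ) ^ j * ((k - i).choose j : ℝ)) := by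
      intro j hj
      rw [mem_range] at hj
      have hij : i + j ≤ k := by omega
      have hc := choose_swap hij
      have hcast : (k.choose j : ℝ) * ((k - j).choose i : ℝ)
          = (k.choose i : ℝ) * ((k - i).choose j : ℝ) := by exact_mod_cast congrArg (Nat.cast : ℕ → ℝ) hc
      rw [hcast]; ring
    rw [sum_congr rfl hterm, ← mul_sum, alt_sum_choose_real]
  rw [sum_congr rfl step2]
  rw [Finset.sum_eq_single k]
  · simp
  · intro i hi hne
    rw [mem_range] at hi
    have : k - i ≠ 0 := by omega
    simp [this]
  · intro h; simp at h

lemma range_succ_eq_insert_Icc (n : ℕ) : range (n + 1) = insert 0 (Finset.Icc 1 n) := by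
  ext x; simp [Finset.mem_Icc]; omega

/-- The coefficient `B_k^{(α)} = 1 + ∑_{j=1}^k C(k,j) (-β)^j m_j / (α+j)_j` with
`(α+j)_j = ∏_{l=1}^j (α+l)`; in particular `B_0^{(α)} = 1`. -/
noncomputable def coefB (α β : ℝ) (m : ℕ → ℝ) (k : ℕ) : ℝ :=
  1 + ∑ j ∈ Finset.Icc 1 k,
    (k.choose j : ℝ) * (-β) ^ j * m j / ∏ l ∈ Finset.Icc 1 j, (α + (l : ℝ))

theorem coefB_recursion (α β : ℝ) (hα : -1 < α) (m : ℕ → ℝ) (k : ℕ) (hk : 1 ≤ k) :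
    coefB α β m k =
      (∑ j ∈ Finset.Icc 1 k, (k.choose j : ℝ) * (-1) ^ (j + 1) * coefB α β m (k - j)) +
        (-β) ^ k * m k / ∏ l ∈ Finset.Icc 1 k, (α + (l : ℝ)) := by
  set d : ℕ → ℝ := fun j =>
    if j = 0 then 1 else (-β) ^ j * m j / ∏ l ∈ Finset.Icc 1 j, (α + (l : ℝ)) with hd
  have hcoef : ∀ n, coefB α β m n = ∑ j ∈ range (n + 1), (n.choose j : ℝ) * d j := by
    intro n
    rw [range_succ_eq_insert_Icc, sum_insert (by simp)]
    have h0 : ((n.choose 0 : ℕ) : ℝ) * d 0 = 1 := by simp [hd]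
    rw [h0, coefB]
    congr 1
    apply sum_congr rfl
    intro j hj
    rw [Finset.mem_Icc] at hj
    have hj0 : j ≠ 0 := by omega
    simp only [hd, if_neg hj0]
    ring
  have hinv := binomial_inversion d k
  have hrw : ∀ j ∈ range (k + 1), (-1 : ℝ) ^ j * (k.choose j : ℝ) *
        (∑ i ∈ range (k - j + 1), ((k - j).choose i : ℝ) * d i)
      = (-1 : ℝ) ^ j * (k.choose j : ℝ) * coefB α β m (k - j) := by
    intro j _; rw [hcoef]
  rw [sum_congr rfl hrw, range_succ_eq_insert_Icc, sum_insert (by simp)] at hinv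
  simp only [pow_zero, Nat.choose_zero_right, Nat.cast_one, one_mul, Nat.sub_zero] at hinv
  have hdk : d k = (-β) ^ k * m k / ∏ l ∈ Finset.Icc 1 k, (α + (l : ℝ)) := by
    have : k ≠ 0 := by omega
    simp [hd, this]
  rw [← hdk]
  have hneg : ∑ j ∈ Finset.Icc 1 k, (k.choose j : ℝ) * (-1) ^ (j + 1) * coefB α β m (k - j)
      = -∑ j ∈ Finset.Icc 1 k, (-1 : ℝ) ^ j * (k.choose j : ℝ) * coefB α β m (k - j) := by
    rw [← Finset.sum_neg_distrib]
    exact sum_congr rfl fun j _ => by ring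
  rw [hneg]
  linarith [hinv]
end
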